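/- arXiv:1108.3754 — 11 statements merged into one kernel-verified Lean document; each statement's English description precedes it below -/
import Mathlib

section
/- Let R be a commutative principal ideal ring and M a free R-module of finite rank s. Then every submodule N of M can be generated by at most s elements. -/
open Submodule

private noncomputable def extLast (R : Type*) [CommRing R] (n : ℕ) :
    (Fin n → R) →ₗ[R] (Fin (n + 1) → R) where
  toFun f := Fin.snoc f 0
  map_add' f g := by
    funext i
    refine Fin.lastCases ?_ (fun j => ?_) i <;> simp
  map_smul' r f := by
    funext i
    refine Fin.lastCases ?_ (fun j => ?_) i <;> simp

private lemma aux (R : Type*) [CommRing R] [IsPrincipalIdealRing R] :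
    ∀ (n : ℕ) (N : Submodule R (Fin n → R)),
      ∃ S : Finset (Fin n → R), (S : Set (Fin n → R)) ⊆ (N : Set (Fin n → R)) ∧
        S.card ≤ n ∧ Submodule.span R (S : Set (Fin n → R)) = N := by
  intro n
  induction n with
  | zero =>
    intro N
    refine ⟨∅, by simp, by simp, ?_⟩
    have : Subsingleton (Fin 0 → R) := ⟨fun a b => funext fun i => i.elim0⟩
    have : Subsingleton (Submodule R (Fin 0 → R)) := inferInstance
    simpa using Subsingleton.elim _ N
  | succ n ih =>
    intro N
    classical
    set π : (Fin (n + 1) → R) →ₗ[R] R := LinearMap.proj (Fin.last n) with hπ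
    set ρ : (Fin (n + 1) → R) →ₗ[R] (Fin n → R) :=
      LinearMap.funLeft R R Fin.castSucc with hρ
    have hρext : ∀ f : Fin n → R, ρ (extLast R n f) = f := by
      intro f; funext i; simp [hρ, extLast, LinearMap.funLeft]
    have hextρ : ∀ v : Fin (n + 1) → R, π v = 0 → extLast R n (ρ v) = v := by
      intro v hv
      funext i
      refine Fin.lastCases ?_ (fun j => ?_) i
      · simpa [extLast, hπ] using hv.symm
      · simp [extLast, hρ, LinearMap.funLeft]
    -- the ideal of last coordinates
    set I : Ideal R := N.map π with hI
    obtain ⟨a, ha⟩ := (IsPrincipalIdealRing.principal I).principal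
    have haI : a ∈ I := by rw [ha]; exact subset_span (Set.mem_singleton a)
    obtain ⟨x, hxN, hxa⟩ := haI
    -- the kernel part
    set N' : Submodule R (Fin n → R) := (N ⊓ LinearMap.ker π).map ρ with hN'
    obtain ⟨S', hS'sub, hS'card, hS'span⟩ := ih N'
    refine ⟨insert x (S'.image (extLast R n)), ?_, ?_, ?_⟩
    · intro v hv
      simp only [Finset.coe_insert, Set.mem_insert_iff, Finset.coe_image,
        Set.mem_image, Finset.mem_coe] at hv
      rcases hv with rfl | ⟨w, hw, rfl⟩
      · exact hxN
      · have hw' : w ∈ N' := hS'sub hw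
        obtain ⟨u, hu, rfl⟩ := hw'
        rw [hextρ u hu.2]
        exact hu.1
    · calc (insert x (S'.image (extLast R n))).card
          ≤ (S'.image (extLast R n)).card + 1 := Finset.card_insert_le _ _
        _ ≤ S'.card + 1 := by gcongr; exact Finset.card_image_le
        _ ≤ n + 1 := by omega
    · apply le_antisymm
      · rw [span_le]
        intro v hv
        simp only [Finset.coe_insert, Set.mem_insert_iff, Finset.coe_image,
          Set.mem_image, Finset.mem_coe] at hv
        rcases hv with rfl | ⟨w, hw, rfl⟩
        · exact hxN
        · obtain ⟨u, hu, rfl⟩ := hS'sub hw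
          rw [hextρ u hu.2]
          exact hu.1
      · intro v hvN
        have hπv : π v ∈ I := ⟨v, hvN, rfl⟩
        rw [ha, Submodule.mem_span_singleton] at hπv
        obtain ⟨r, hr⟩ := hπv
        have hker : v - r • x ∈ N ⊓ LinearMap.ker π := by
          constructor
          · exact N.sub_mem hvN (N.smul_mem r hxN)
          · simp [LinearMap.mem_ker, hxa, ← hr, mul_comm]
        have h1 : ρ (v - r • x) ∈ N' := ⟨v - r • x, hker, rfl⟩
        rw [← hS'span] at h1
        have h2 : extLast R n (ρ (v - r • x)) ∈
            span R ((S'.image (extLast R n) : Finset (Fin (n+1) → R)) :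
              Set (Fin (n+1) → R)) := by
          rw [Finset.coe_image, ← Submodule.map_span]
          exact mem_map_of_mem h1
        rw [hextρ _ hker.2] at h2
        have hx : x ∈ span R ((insert x (S'.image (extLast R n)) :
            Finset (Fin (n+1) → R)) : Set (Fin (n+1) → R)) :=
          subset_span (by simp)
        have h2' : v - r • x ∈ span R ((insert x (S'.image (extLast R n)) :
            Finset (Fin (n+1) → R)) : Set (Fin (n+1) → R)) := by
          refine span_mono ?_ h2
          intro y hy
          simp only [Finset.coe_insert, Finset.coe_image] at hy ⊢
          exact Set.mem_insert_iff.mpr (Or.inr hy)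
        have := Submodule.add_mem _ h2' (Submodule.smul_mem _ r hx)
        simpa using this

/-- Let `R` be a commutative principal ideal ring and `M` a free `R`-module of
finite rank `s`. Then every submodule `N` of `M` can be generated by at most
`s` elements. -/
theorem submodule_generated_by_at_most_rank
    (R : Type*) [CommRing R] [IsPrincipalIdealRing R]
    (M : Type*) [AddCommGroup M] [Module R M] (s : ℕ)
    (b : Module.Basis (Fin s) R M) (N : Submodule R M) :
    ∃ S : Finset M, (S : Set M) ⊆ (N : Set M) ∧ S.card ≤ s ∧
      Submodule.span R (S : Set M) = N := by
  classical
  let e : M ≃ₗ[R] (Fin s → R) := b.equivFun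
  obtain ⟨S', hsub, hcard, hspan⟩ := aux R s (N.map (e : M →ₗ[R] (Fin s → R)))
  refine ⟨S'.image e.symm, ?_, ?_, ?_⟩
  · intro v hv
    simp only [Finset.coe_image, Set.mem_image, Finset.mem_coe] at hv
    obtain ⟨w, hw, rfl⟩ := hv
    obtain ⟨u, hu, rfl⟩ := hsub hw
    simpa using hu
  · exact le_trans Finset.card_image_le hcard
  · rw [Finset.coe_image, ← LinearEquiv.coe_coe, ← Submodule.map_span, hspan]
    ext m
    simp only [Submodule.mem_map, LinearEquiv.coe_coe]
    constructor
    · rintro ⟨y, hy, rfl⟩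
      obtain ⟨z, hz, rfl⟩ := hy
      simpa using hz
    · intro hm
      exact ⟨e m, ⟨m, hm, rfl⟩, by simp⟩
end

section
/- Every left ideal of the ring M_ℓ(F_q)[X]/(X^m − 1) is principal, i.e., generated by a single element as a left ideal. -/
open Matrix

/-- Over a quotient of a PID, every submodule of the free module of rank `n`
is spanned by `n` vectors. -/
lemma span_fin_of_quot_pid {A : Type*} [CommRing A] [IsDomain A] [IsPrincipalIdealRing A]
    (J : Ideal A) (n : ℕ) (N : Submodule (A ⧸ J) (Fin n → A ⧸ J)) :
    ∃ v : Fin n → (Fin n → A ⧸ J), N = Submodule.span (A ⧸ J) (Set.range v) := by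
  classical
  set R := A ⧸ J
  letI : Algebra A R := Ideal.Quotient.algebra A
  -- the A-linear projection A^n → R^n
  let L : (Fin n → A) →ₗ[A] (Fin n → R) :=
    LinearMap.pi fun i => (Algebra.linearMap A R).comp (LinearMap.proj i)
  have hLsurj : Function.Surjective L := by
    intro x
    choose y hy using fun i => Ideal.Quotient.mk_surjective (x i)
    exact ⟨y, funext fun i => hy i⟩
  let N' : Submodule A (Fin n → A) := (N.restrictScalars A).comap L
  obtain ⟨k, b⟩ := Submodule.basisOfPid (Pi.basisFun A (Fin n)) N'
  have hk : k ≤ n := by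
    have h1 : Module.rank A N' = k := by
      simpa using (b.reindex Equiv.ulift.symm).mk_eq_rank''.symm
    have h2 : Module.rank A (Fin n → A) = n := by simp [rank_fun']
    have := N'.rank_le
    rw [h1, h2] at this
    exact_mod_cast this
  refine ⟨fun i => if h : (i : ℕ) < k then L (b ⟨i, h⟩) else 0, ?_⟩
  apply le_antisymm
  · intro x hx
    obtain ⟨y, rfl⟩ := hLsurj x
    have hy : y ∈ N' := hx
    have hrep : ((∑ i, b.repr ⟨y, hy⟩ i • b i : N') : Fin n → A) = y := by
      rw [Module.Basis.sum_repr]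
    rw [← hrep]
    push_cast
    rw [map_sum]
    apply Submodule.sum_mem
    intro i _
    rw [LinearMap.map_smul]
    have hv : L (b i : Fin n → A) =
        (fun j : Fin n => if h : (j : ℕ) < k then L (b ⟨j, h⟩) else 0) ⟨i, lt_of_lt_of_le i.2 hk⟩ := by
      simp
    rw [← algebraMap_smul R (b.repr ⟨y, hy⟩ i)]
    refine Submodule.smul_mem _ _ (Submodule.subset_span ?_)
    rw [hv]
    exact Set.mem_range_self _
  · rw [Submodule.span_le]
    rintro _ ⟨i, rfl⟩
    dsimp only
    split
    next h => exact (b ⟨_, h⟩).2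
    next => exact N.zero_mem

/-- If every submodule of `R^n` is spanned by `n` vectors, then every left ideal
of `M_n(R)` is principal. -/
lemma matrix_left_ideal_principal {R : Type*} [CommRing R] {n : ℕ} (hn : 0 < n)
    (hgen : ∀ N : Submodule R (Fin n → R),
      ∃ v : Fin n → (Fin n → R), N = Submodule.span R (Set.range v))
    (I : Submodule (Matrix (Fin n) (Fin n) R) (Matrix (Fin n) (Fin n) R)) :
    ∃ g, I = Submodule.span (Matrix (Fin n) (Fin n) R) {g} := by
  classical
  haveI : NeZero n := ⟨hn.ne'⟩
  -- the set of first rows of elements of `I`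
  let N : Submodule R (Fin n → R) :=
    { carrier := {v | ∃ A ∈ I, A 0 = v}
      zero_mem' := ⟨0, I.zero_mem, rfl⟩
      add_mem' := by
        rintro v w ⟨A, hA, rfl⟩ ⟨B, hB, rfl⟩
        exact ⟨A + B, I.add_mem hA hB, rfl⟩
      smul_mem' := by
        rintro c v ⟨A, hA, rfl⟩
        refine ⟨c • A, ?_, rfl⟩
        have := I.smul_mem (c • (1 : Matrix (Fin n) (Fin n) R)) hA
        rwa [smul_eq_mul, smul_mul_assoc, one_mul] at this }
  have row_mem : ∀ A ∈ I, ∀ i, A i ∈ N := by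
    intro A hA i
    refine ⟨Matrix.single 0 i 1 * A, ?_, ?_⟩
    · simpa [smul_eq_mul] using I.smul_mem (Matrix.single 0 i 1) hA
    · ext j
      simp [Matrix.mul_apply, Matrix.single]
  have mem_of_rows : ∀ A, (∀ i, A i ∈ N) → A ∈ I := by
    intro A h
    choose B hB hB' using h
    have hAeq : A = ∑ i, Matrix.single i 0 1 * B i := by
      ext i j
      rw [Matrix.sum_apply]
      rw [Finset.sum_eq_single i]
      · rw [← hB' i]
        simp [Matrix.mul_apply, Matrix.single]
      · intro k _ hk
        simp [Matrix.mul_apply, Matrix.single, hk]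
      · simp
    rw [hAeq]
    exact Submodule.sum_mem _ fun i _ => by
      simpa [smul_eq_mul] using I.smul_mem (Matrix.single i 0 1) (hB i)
  obtain ⟨v, hv⟩ := hgen N
  refine ⟨Matrix.of v, le_antisymm ?_ ?_⟩
  · intro A hA
    have hrows : ∀ i, A i ∈ Submodule.span R (Set.range v) := fun i => hv ▸ row_mem A hA i
    choose c hc using fun i => (Submodule.mem_span_range_iff_exists_fun R).mp (hrows i)
    refine Submodule.mem_span_singleton.mpr ⟨Matrix.of c, ?_⟩
    rw [smul_eq_mul]
    ext i j
    rw [Matrix.mul_apply]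
    have := congrFun (hc i) j
    simpa [Finset.sum_apply] using this
  · rw [Submodule.span_le, Set.singleton_subset_iff]
    refine mem_of_rows _ fun i => ?_
    rw [hv]
    exact Submodule.subset_span (Set.mem_range_self i)

/-- The ring `M_ℓ(F_q)[X]/(X^m - 1)`, realized (via the canonical isomorphism)
as `M_ℓ(F_q[X]/(X^m - 1))`. -/
abbrev QCRing (F : Type*) [Field F] (ℓ m : ℕ) :=
  Matrix (Fin ℓ) (Fin ℓ) (Polynomial F ⧸ Ideal.span {(Polynomial.X : Polynomial F) ^ m - 1})

/-- Every left ideal of `M_ℓ(F_q)[X]/(X^m - 1)` is principal. -/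
theorem left_ideal_of_QCRing_principal
    (F : Type*) [Field F] [Fintype F] (ℓ m : ℕ) (hℓ : 0 < ℓ) (hm : 0 < m)
    (I : Submodule (QCRing F ℓ m) (QCRing F ℓ m)) :
    ∃ g : QCRing F ℓ m, I = Submodule.span (QCRing F ℓ m) {g} := by
  exact matrix_left_ideal_principal hℓ
    (span_fin_of_quot_pid (Ideal.span {(Polynomial.X : Polynomial F) ^ m - 1}) ℓ) I
end

section
/- There is a one-to-one correspondence between ℓ-quasi-cyclic codes of length mℓ over F_q and left ideals of M_ℓ(F_q)[X]/(X^m − 1). -/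
/-- The cyclic shift by `j` positions on `F^n`. -/
def shiftBy {F : Type*} {n : ℕ} (j : ℕ) (c : Fin n → F) : Fin n → F :=
  fun i => c ⟨(i.val + j) % n, Nat.mod_lt _ i.pos⟩

open Matrix in
/-- Morita: left ideals of `M_ℓ(R)` ↔ `R`-submodules of `R^ℓ`. -/
noncomputable def moritaEquiv (R : Type*) [CommRing R] (ℓ : ℕ) (hℓ : 0 < ℓ) :
    Submodule R (Fin ℓ → R) ≃
      Submodule (Matrix (Fin ℓ) (Fin ℓ) R) (Matrix (Fin ℓ) (Fin ℓ) R) := by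
  haveI : NeZero ℓ := ⟨hℓ.ne'⟩
  set i0 : Fin ℓ := 0 with hi0
  -- row matrix
  set rowM : (Fin ℓ → R) → Matrix (Fin ℓ) (Fin ℓ) R :=
    fun v => Matrix.of fun i j => if i = i0 then v j else 0 with hrowM
  refine ⟨fun N => ⟨⟨⟨{M | ∀ i, (fun j => M i j) ∈ N}, ?_⟩, ?_⟩, ?_⟩,
          fun I => ⟨⟨⟨{v | rowM v ∈ I}, ?_⟩, ?_⟩, ?_⟩, ?_, ?_⟩
  · -- add_mem for toFun
    intro A B hA hB i
    exact N.add_mem (hA i) (hB i)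
  · intro i; exact N.zero_mem
  · -- smul_mem: smul is mul
    intro A M hM i
    have : (fun j => (A * M) i j) = ∑ k, A i k • (fun j => M k j) := by
      funext j
      simp [Matrix.mul_apply, Finset.sum_apply]
    show (fun j => (A • M) i j) ∈ N
    rw [smul_eq_mul, this]
    exact Submodule.sum_mem _ fun k _ => N.smul_mem _ (hM k)
  · -- add_mem for invFun
    intro a b ha hb
    have : rowM (a + b) = rowM a + rowM b := by
      ext i j; by_cases h : i = i0 <;> simp [hrowM, h]
    show rowM (a + b) ∈ I
    rw [this]; exact I.add_mem ha hb
  · have : rowM 0 = 0 := by ext i j; simp [hrowM]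
    show rowM 0 ∈ I
    rw [this]; exact this ▸ I.zero_mem
  · intro r v hv
    have : rowM (r • v) = (r • (1 : Matrix (Fin ℓ) (Fin ℓ) R)) * rowM v := by
      ext i j
      by_cases h : i = i0 <;>
        simp [hrowM, Matrix.mul_apply, Matrix.one_apply, ite_mul, h, Finset.sum_ite_eq]
    show rowM (r • v) ∈ I
    rw [this]
    exact I.smul_mem _ hv
  · -- left_inv
    intro N
    ext v
    constructor
    · intro h
      have := h i0
      simpa [hrowM] using this
    · intro hv i
      by_cases h : i = i0
      · simpa [hrowM, h] using hv
      · have : (fun j => rowM v i j) = (0 : Fin ℓ → R) := by funext j; simp [hrowM, h]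
        try simp only [Set.mem_setOf_eq] at *
        rw [this] ; exact N.zero_mem
  · -- right_inv
    intro I
    ext M
    constructor
    · intro h
      have hM : M = ∑ i, (Matrix.single i i0 (1:R)) * rowM (fun j => M i j) := by
        ext a j
        rw [Matrix.sum_apply]
        have : ∀ i : Fin ℓ, ((Matrix.single i i0 (1:R)) * rowM (fun j => M i j)) a j
            = if a = i then M i j else 0 := by
          intro i
          simp [Matrix.mul_apply, Matrix.single, hrowM, ite_and, ite_mul,
            Finset.sum_ite_eq, eq_comm]
        simp only [this, Finset.sum_ite_eq, Finset.mem_univ, if_true]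
      rw [hM]
      exact Submodule.sum_mem _ fun i _ => I.smul_mem _ (h i)
    · intro hM i
      have : rowM (fun j => M i j) = (Matrix.single i0 i (1:R)) * M := by
        ext a j
        by_cases h : a = i0
        · simp [Matrix.mul_apply, Matrix.single, hrowM, ite_and, ite_mul, h,
            Finset.sum_ite_eq]
        · simp [Matrix.mul_apply, Matrix.single, hrowM, ite_and, ite_mul, h,
            Ne.symm h, Finset.sum_ite_eq]
      show rowM _ ∈ I
      rw [this]
      exact I.smul_mem _ hM

open Polynomial

section
variable {F : Type*} [Field F] {m ℓ : ℕ}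

lemma qc_natDeg (hm : 0 < m) : ((X : Polynomial F) ^ m - 1).natDegree = m := by
  rw [← Polynomial.C_1, Polynomial.natDegree_X_pow_sub_C]

lemma qc_fne (hm : 0 < m) : ((X : Polynomial F) ^ m - 1) ≠ 0 := by
  intro h
  have := qc_natDeg (F := F) hm
  rw [h] at this
  simp at this
  omega

lemma qc_root_pow (hm : 0 < m) :
    (AdjoinRoot.root ((X : Polynomial F) ^ m - 1)) ^ m = 1 := by
  have h := AdjoinRoot.mk_self (f := (X : Polynomial F) ^ m - 1)
  rw [map_sub, map_pow, AdjoinRoot.mk_X, map_one, sub_eq_zero] at h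
  exact h

lemma qc_root_pow_mod (hm : 0 < m) (a : ℕ) :
    (AdjoinRoot.root ((X : Polynomial F) ^ m - 1)) ^ a
      = (AdjoinRoot.root ((X : Polynomial F) ^ m - 1)) ^ (a % m) := by
  conv_lhs => rw [← Nat.div_add_mod a m]
  rw [pow_add, pow_mul, qc_root_pow hm, one_pow, one_mul]

lemma qc_root_eq (hm : 0 < m) :
    ((AdjoinRoot.root ((X : Polynomial F) ^ m - 1)) ^ (m - 1)) ^ (m - 1)
      = AdjoinRoot.root ((X : Polynomial F) ^ m - 1) := by
  set x := AdjoinRoot.root ((X : Polynomial F) ^ m - 1)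
  have h1 : (x ^ (m-1)) ^ (m-1) * x ^ (m-1) = 1 := by
    rw [← pow_mul, ← pow_add]
    have hk : m - 1 + 1 = m := by omega
    have : (m-1) * (m-1) + (m-1) = (m-1) * m := by
      calc (m-1)*(m-1) + (m-1) = (m-1)*((m-1)+1) := by ring
        _ = (m-1)*m := by rw [hk]
    rw [this, mul_comm, pow_mul, qc_root_pow hm, one_pow]
  have h2 : x * x ^ (m-1) = 1 := by
    rw [← pow_succ']
    have : m - 1 + 1 = m := by omega
    rw [this, qc_root_pow hm]
  calc (x ^ (m-1)) ^ (m-1) = (x ^ (m-1)) ^ (m-1) * (x * x ^ (m-1)) := by rw [h2, mul_one]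
    _ = x * ((x ^ (m-1)) ^ (m-1) * x ^ (m-1)) := by ring
    _ = x := by rw [h1, mul_one]

lemma qc_nat1 (hm : 0 < m) (hℓ : 0 < ℓ) (i j : ℕ) (hi : i < m) (hj : j < ℓ) :
    (j + ℓ * i + ℓ) % (m * ℓ) = j + ℓ * ((i + 1) % m) := by
  have key : j + ℓ * i + ℓ = j + ℓ * (i + 1) := by ring
  rcases Nat.lt_or_ge (i + 1) m with h | h
  · have h1 : j + ℓ * (i + 1) < m * ℓ := by
      calc j + ℓ * (i + 1) < ℓ + ℓ * (i + 1) := by omega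
        _ = ℓ * (i + 2) := by ring
        _ ≤ ℓ * m := Nat.mul_le_mul_left ℓ (by omega)
        _ = m * ℓ := Nat.mul_comm _ _
    rw [key, Nat.mod_eq_of_lt h1, Nat.mod_eq_of_lt h]
  · have him : i + 1 = m := by omega
    rw [key, him, Nat.mod_self, Nat.mul_zero, Nat.add_zero]
    have : j + ℓ * m = j + m * ℓ := by ring
    rw [this, Nat.add_mod_right, Nat.mod_eq_of_lt]
    calc j < ℓ := hj
      _ = 1 * ℓ := (Nat.one_mul ℓ).symm
      _ ≤ m * ℓ := Nat.mul_le_mul_right ℓ hm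

lemma qc_nat2 (hm : 0 < m) (i : ℕ) (hi : i < m) :
    (m - 1 + (i + 1) % m) % m = i := by
  rcases Nat.lt_or_ge (i + 1) m with h | h
  · rw [Nat.mod_eq_of_lt h]
    have : m - 1 + (i + 1) = i + m := by omega
    rw [this, Nat.add_mod_right, Nat.mod_eq_of_lt hi]
  · have him : i + 1 = m := by omega
    rw [him, Nat.mod_self, Nat.add_zero, Nat.mod_eq_of_lt (by omega)]
    omega

/-- The index bijection. -/
def qcIdx (m ℓ : ℕ) : Fin ℓ × Fin m ≃ Fin (m * ℓ) :=
  (Equiv.prodComm _ _).trans finProdFinEquiv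

lemma qcIdx_val (j : Fin ℓ) (i : Fin m) : ((qcIdx m ℓ (j, i)) : ℕ) = ↑j + ℓ * ↑i := by
  simp [qcIdx, finProdFinEquiv_apply_val]

/-- The basis `1, x, …, x^{m-1}` of `F[X]/(X^m-1)`. -/
noncomputable def qcBasis (hm : 0 < m) :
    Module.Basis (Fin m) F (AdjoinRoot ((X : Polynomial F) ^ m - 1)) :=
  (AdjoinRoot.powerBasis (qc_fne hm)).basis.reindex
    (finCongr (by rw [AdjoinRoot.powerBasis_dim, qc_natDeg hm]))

lemma qcBasis_apply (hm : 0 < m) (i : Fin m) :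
    qcBasis (F := F) hm i = (AdjoinRoot.root ((X : Polynomial F) ^ m - 1)) ^ (i : ℕ) := by
  rw [qcBasis, Module.Basis.reindex_apply,
    PowerBasis.coe_basis (AdjoinRoot.powerBasis (qc_fne (F := F) hm))]
  simp [AdjoinRoot.powerBasis_gen]

/-- The linear equivalence `F^{mℓ} ≃ (F[X]/(X^m-1))^ℓ`. -/
noncomputable def qcPsi (hm : 0 < m) :
    (Fin (m * ℓ) → F) ≃ₗ[F] (Fin ℓ → AdjoinRoot ((X : Polynomial F) ^ m - 1)) :=
  (LinearEquiv.funCongrLeft F F (qcIdx m ℓ)).trans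
    ((LinearEquiv.curry F F (Fin ℓ) (Fin m)).trans
      (LinearEquiv.piCongrRight fun _ => (qcBasis hm).equivFun.symm))

lemma qcPsi_apply (hm : 0 < m) (c : Fin (m * ℓ) → F) (j : Fin ℓ) :
    qcPsi hm c j = ∑ i : Fin m,
      c (qcIdx m ℓ (j, i)) • (AdjoinRoot.root ((X : Polynomial F) ^ m - 1)) ^ (i : ℕ) := by
  simp [qcPsi, LinearEquiv.funCongrLeft, Module.Basis.equivFun_symm_apply, qcBasis_apply,
    LinearEquiv.curry]

lemma qcPsi_shift (hm : 0 < m) (hℓ : 0 < ℓ) (c : Fin (m * ℓ) → F) :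
    qcPsi hm (shiftBy ℓ c)
      = ((AdjoinRoot.root ((X : Polynomial F) ^ m - 1)) ^ (m - 1)) • qcPsi hm c := by
  haveI : NeZero m := ⟨hm.ne'⟩
  set x := AdjoinRoot.root ((X : Polynomial F) ^ m - 1) with hx
  funext j
  rw [Pi.smul_apply, qcPsi_apply, qcPsi_apply, Finset.smul_sum]
  refine Fintype.sum_equiv (Equiv.addRight (1 : Fin m)) _ _ ?_
  intro i
  rw [Equiv.coe_addRight]
  have hval : ((i + 1 : Fin m) : ℕ) = ((i : ℕ) + 1) % m := by
    rw [Fin.val_add, Fin.val_one']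
    conv_rhs => rw [Nat.add_mod]
    rw [Nat.mod_eq_of_lt i.isLt]
  have hpow : x ^ (m - 1) * x ^ (((i : ℕ) + 1) % m) = x ^ (i : ℕ) := by
    rw [← pow_add, qc_root_pow_mod hm, qc_nat2 hm _ i.isLt]
  have harg : (shiftBy ℓ c) (qcIdx m ℓ (j, i)) = c (qcIdx m ℓ (j, i + 1)) := by
    show c _ = c _
    congr 1
    apply Fin.ext
    simp only [qcIdx_val, hval]
    exact qc_nat1 hm hℓ i j i.isLt j.isLt
  rw [harg, smul_comm, smul_eq_mul, hval, hpow]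

/-- An `F`-subspace of `(F[X]/(f))^ℓ` closed under multiplication by the root
is an `F[X]/(f)`-submodule. -/
def qcPromote {F : Type*} [Field F] (f : Polynomial F) {ℓ : ℕ}
    (S : Submodule F (Fin ℓ → AdjoinRoot f))
    (hS : ∀ v ∈ S, (AdjoinRoot.root f) • v ∈ S) :
    Submodule (AdjoinRoot f) (Fin ℓ → AdjoinRoot f) where
  carrier := S
  add_mem' := fun ha hb => S.add_mem ha hb
  zero_mem' := S.zero_mem
  smul_mem' := by
    intro r v hv
    induction r using AdjoinRoot.induction_on with
    | ih p =>
      induction p using Polynomial.induction_on with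
      | C a =>
        have h1 : (AdjoinRoot.mk f) (C a) = algebraMap F (AdjoinRoot f) a := rfl
        rw [h1, algebraMap_smul]
        exact S.smul_mem a hv
      | add p q hp hq =>
        rw [map_add, add_smul]
        exact S.add_mem hp hq
      | monomial n a ih =>
        have h1 : (AdjoinRoot.mk f) (C a * X ^ (n + 1))
            = AdjoinRoot.root f * (AdjoinRoot.mk f) (C a * X ^ n) := by
          rw [map_mul, map_mul, map_pow, map_pow, AdjoinRoot.mk_X, pow_succ]
          ring
        rw [h1, mul_smul]
        exact hS _ ih

lemma mem_qcPromote {F : Type*} [Field F] (f : Polynomial F) {ℓ : ℕ}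
    (S : Submodule F (Fin ℓ → AdjoinRoot f)) (hS) (v) :
    v ∈ qcPromote f S hS ↔ v ∈ S := Iff.rfl

/-- Quasi-cyclic codes correspond to `R`-submodules of `R^ℓ`. -/
noncomputable def qcCodeEquiv (F : Type*) [Field F] (m ℓ : ℕ) (hm : 0 < m) (hℓ : 0 < ℓ) :
    {C : Submodule F (Fin (m * ℓ) → F) // ∀ c ∈ C, shiftBy ℓ c ∈ C} ≃
      Submodule (AdjoinRoot ((X : Polynomial F) ^ m - 1))
        (Fin ℓ → AdjoinRoot ((X : Polynomial F) ^ m - 1)) := by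
  set x := AdjoinRoot.root ((X : Polynomial F) ^ m - 1) with hx
  set ψ : (Fin (m * ℓ) → F) →ₗ[F] (Fin ℓ → AdjoinRoot ((X : Polynomial F) ^ m - 1)) :=
    (qcPsi hm).toLinearMap with hψ
  have hiter : ∀ (C : Submodule F (Fin (m * ℓ) → F)), (∀ c ∈ C, shiftBy ℓ c ∈ C) →
      ∀ (k : ℕ) (c : Fin (m * ℓ) → F), c ∈ C →
        (x ^ (m - 1)) ^ k • qcPsi hm c ∈ C.map ψ := by
    intro C hC k
    induction k with
    | zero => intro c hc; rw [pow_zero, one_smul]; exact ⟨c, hc, rfl⟩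
    | succ k ihk =>
      intro c hc
      have h1 : (x ^ (m-1)) ^ (k+1) • qcPsi hm c
          = (x ^ (m-1)) ^ k • qcPsi hm (shiftBy ℓ c) := by
        rw [qcPsi_shift hm hℓ, smul_smul, pow_succ, hx]
      rw [h1]
      exact ihk _ (hC c hc)
  refine ⟨fun C => qcPromote _ (C.1.map ψ) ?_,
    fun I => ⟨(I.restrictScalars F).comap ψ, ?_⟩, ?_, ?_⟩
  · -- closure under x • for the image
    rintro v ⟨c, hc, rfl⟩
    have h1 : x • ψ c = (x ^ (m-1)) ^ (m-1) • qcPsi hm c := by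
      rw [qc_root_eq hm]; rfl
    rw [h1]
    exact hiter C.1 C.2 (m-1) c hc
  · -- stability of the preimage
    intro c hc
    have h1 : ψ (shiftBy ℓ c) = (x ^ (m - 1)) • ψ c := qcPsi_shift hm hℓ c
    simp only [Submodule.mem_comap, Submodule.restrictScalars_mem] at *
    rw [h1]
    exact Submodule.smul_mem _ _ hc
  · -- left inverse
    rintro ⟨C, hC⟩
    apply Subtype.ext
    ext c
    simp only [Submodule.mem_comap, Submodule.restrictScalars_mem, mem_qcPromote,
      Submodule.mem_map]
    constructor
    · rintro ⟨a, ha, hac⟩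
      rwa [← (qcPsi hm).injective hac]
    · intro hc; exact ⟨c, hc, rfl⟩
  · -- right inverse
    intro I
    ext w
    simp only [mem_qcPromote, Submodule.mem_map, Submodule.mem_comap,
      Submodule.restrictScalars_mem]
    constructor
    · rintro ⟨a, ha, rfl⟩; exact ha
    · intro hw
      refine ⟨(qcPsi hm).symm w, ?_, by simp [hψ]⟩
      show ψ ((qcPsi hm).symm w) ∈ I
      simp only [hψ, LinearEquiv.coe_coe, LinearEquiv.apply_symm_apply]
      exact hw

end

/-- There is a one-to-one correspondence between `ℓ`-quasi-cyclic codes of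
length `mℓ` over `F_q` (linear subspaces of `F_q^{mℓ}` stable under the shift
`T^ℓ`) and left ideals of `M_ℓ(F_q)[X]/(X^m - 1)`. -/
theorem quasiCyclic_codes_equiv_left_ideals
    (F : Type*) [Field F] [Fintype F] (m ℓ : ℕ) (hm : 0 < m) (hℓ : 0 < ℓ) :
    Nonempty
      ({C : Submodule F (Fin (m * ℓ) → F) // ∀ c ∈ C, shiftBy ℓ c ∈ C} ≃
        Submodule (QCRing F ℓ m) (QCRing F ℓ m)) := by
  exact ⟨(qcCodeEquiv F m ℓ hm hℓ).trans
    (moritaEquiv (AdjoinRoot ((Polynomial.X : Polynomial F) ^ m - 1)) ℓ hℓ)⟩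
end

section
/- Let C be an ℓ-quasi-cyclic code over F_q of length mℓ with block rank r. Then there exist r linearly independent vectors g_1, ..., g_r in C such that the collection {T^{jℓ}(g_i) : 1 ≤ i ≤ r, 0 ≤ j ≤ m−1} spans C. -/
/-- The index `t*ℓ + j` of the `j`-th coordinate of the `t`-th block. -/
def blockIdx {m ℓ : ℕ} (t : Fin m) (j : Fin ℓ) : Fin (m * ℓ) :=
  ⟨t.val * ℓ + j.val, by
    have h1 : (t.val + 1) * ℓ ≤ m * ℓ := Nat.mul_le_mul_right ℓ t.isLt
    have h2 : (t.val + 1) * ℓ = t.val * ℓ + ℓ := Nat.succ_mul _ _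
    have h3 := j.isLt
    omega⟩

open Polynomial Module Submodule Set

section Arith

lemma qc_mod_block {m ℓ : ℕ} (hm : 0 < m) (A u : ℕ) (hu : u < ℓ) :
    (A * ℓ + u) % (m * ℓ) = (A % m) * ℓ + u := by
  conv_lhs => rw [← Nat.div_add_mod A m]
  have h1 : (m * (A / m) + A % m) * ℓ + u = (A % m * ℓ + u) + (A / m) * (m * ℓ) := by ring
  rw [h1, Nat.add_mul_mod_self_right]
  apply Nat.mod_eq_of_lt
  have h2 : A % m < m := Nat.mod_lt _ hm
  have h3 : (A % m + 1) * ℓ ≤ m * ℓ := Nat.mul_le_mul_right ℓ h2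
  nlinarith

lemma qc_mod_eq_zero_iff {m x : ℕ} (hm : 0 < m) (hx1 : 0 < x) (hx2 : x < 2 * m) :
    x % m = 0 ↔ x = m := by
  constructor
  · intro h
    obtain ⟨c, rfl⟩ := Nat.dvd_of_mod_eq_zero h
    have hc2 : c < 2 := by
      by_contra hc
      push_neg at hc
      have : m * 2 ≤ m * c := Nat.mul_le_mul_left _ hc
      rw [Nat.mul_comm 2 m] at hx2
      omega
    interval_cases c <;> omega
  · rintro rfl
    exact Nat.mod_self _

lemma qc_cond_iff {m : ℕ} (hm : 0 < m) (s t : ℕ) (hs : s < m) (ht : t < m) :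
    (s + (m - t)) % m = 0 ↔ s = t := by
  rw [qc_mod_eq_zero_iff hm (by omega) (by omega)]
  omega

end Arith

section Shift

variable {F : Type*} [Field F] {n : ℕ}

lemma shiftBy_shiftBy (a b : ℕ) (c : Fin n → F) :
    shiftBy a (shiftBy b c) = shiftBy (a + b) c := by
  funext i
  show c ⟨((i.val + a) % n + b) % n, _⟩ = c ⟨(i.val + (a + b)) % n, _⟩
  congr 1
  apply Fin.ext
  show ((i.val + a) % n + b) % n = (i.val + (a + b)) % n
  rw [Nat.mod_add_mod, Nat.add_assoc]

lemma shiftBy_zero (c : Fin n → F) : shiftBy 0 c = c := by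
  funext i
  show c ⟨(i.val + 0) % n, _⟩ = c i
  congr 1
  apply Fin.ext
  simp [Nat.mod_eq_of_lt i.isLt]

lemma shiftBy_mod (a : ℕ) (c : Fin n → F) : shiftBy a c = shiftBy (a % n) c := by
  funext i
  show c ⟨(i.val + a) % n, _⟩ = c ⟨(i.val + a % n) % n, _⟩
  congr 1
  apply Fin.ext
  show (i.val + a) % n = (i.val + a % n) % n
  conv_lhs => rw [Nat.add_mod]
  conv_rhs => rw [Nat.add_mod, Nat.mod_mod_of_dvd _ dvd_rfl]

/-- shift as a linear map -/
def shiftL (F : Type*) [Field F] (n : ℕ) (a : ℕ) : (Fin n → F) →ₗ[F] (Fin n → F) :=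
  LinearMap.funLeft F F fun i => ⟨(i.val + a) % n, Nat.mod_lt _ i.pos⟩

@[simp] lemma shiftL_apply (a : ℕ) (c : Fin n → F) : shiftL F n a c = shiftBy a c := rfl

lemma shiftL_pow_apply (a e : ℕ) (c : Fin n → F) :
    ((shiftL F n a) ^ e) c = shiftBy (e * a) c := by
  induction e with
  | zero => simp [shiftBy_zero]
  | succ e ih =>
      rw [pow_succ', Module.End.mul_apply, ih, shiftL_apply, shiftBy_shiftBy]
      congr 1
      ring

end Shift

section Blocks

variable (F : Type*) [Field F] (m ℓ : ℕ)

/-- embedding of a block into the first block of `F^{mℓ}` -/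
def blockEmb : (Fin ℓ → F) →ₗ[F] (Fin (m * ℓ) → F) where
  toFun u := fun i => if h : i.val < ℓ then u ⟨i.val, h⟩ else 0
  map_add' u v := by funext i; by_cases h : i.val < ℓ <;> simp [h]
  map_smul' a u := by funext i; by_cases h : i.val < ℓ <;> simp [h]

/-- projection onto the `t`-th block -/
def blockProj (t : Fin m) : (Fin (m * ℓ) → F) →ₗ[F] (Fin ℓ → F) :=
  LinearMap.funLeft F F (blockIdx t)

variable {F m ℓ}

lemma blockProj_apply (t : Fin m) (c : Fin (m * ℓ) → F) (j : Fin ℓ) :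
    blockProj F m ℓ t c j = c (blockIdx t j) := rfl

lemma fin_apply_congr {N : ℕ} (c : Fin N → F) {i j : Fin N} (h : i.val = j.val) :
    c i = c j := by
  congr 1
  exact Fin.ext h

lemma qc_coord (hm : 0 < m) (e : ℕ) (v : Fin ℓ → F) (s : Fin m) (u : Fin ℓ) :
    shiftBy (e * ℓ) (blockEmb F m ℓ v) (blockIdx s u) =
      if (s.val + e) % m = 0 then v u else 0 := by
  have hidx : ((blockIdx s u).val + e * ℓ) % (m * ℓ) = ((s.val + e) % m) * ℓ + u.val := by
    show (s.val * ℓ + u.val + e * ℓ) % (m * ℓ) = _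
    have h1 : s.val * ℓ + u.val + e * ℓ = (s.val + e) * ℓ + u.val := by ring
    rw [h1, qc_mod_block hm _ _ u.isLt]
  show blockEmb F m ℓ v ⟨((blockIdx s u).val + e * ℓ) % (m * ℓ), _⟩ = _
  by_cases h0 : (s.val + e) % m = 0
  · rw [if_pos h0]
    have hval : (⟨((blockIdx s u).val + e * ℓ) % (m * ℓ), by
        exact Nat.mod_lt _ (blockIdx s u).pos⟩ : Fin (m * ℓ)).val = u.val := by
      simp [hidx, h0]
    show dite _ _ _ = _
    rw [dif_pos (by rw [hval]; exact u.isLt)]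
    exact fin_apply_congr v hval
  · rw [if_neg h0]
    have hq : 1 ≤ (s.val + e) % m := Nat.one_le_iff_ne_zero.2 h0
    have hge : ℓ ≤ ((s.val + e) % m) * ℓ := by
      calc ℓ = 1 * ℓ := (one_mul ℓ).symm
      _ ≤ ((s.val + e) % m) * ℓ := Nat.mul_le_mul_right ℓ hq
    have hval : (⟨((blockIdx s u).val + e * ℓ) % (m * ℓ), by
        exact Nat.mod_lt _ (blockIdx s u).pos⟩ : Fin (m * ℓ)).val
        = ((s.val + e) % m) * ℓ + u.val := hidx
    show dite _ _ _ = _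
    rw [dif_neg (by rw [hval]; omega)]

/-- every index is a block index -/
lemma exists_blockIdx (hm : 0 < m) (hℓ : 0 < ℓ) (i : Fin (m * ℓ)) :
    ∃ (t : Fin m) (u : Fin ℓ), i = blockIdx t u := by
  refine ⟨⟨i.val / ℓ, ?_⟩, ⟨i.val % ℓ, Nat.mod_lt _ hℓ⟩, ?_⟩
  · exact (Nat.div_lt_iff_lt_mul hℓ).2 i.isLt
  · apply Fin.ext
    show i.val = i.val / ℓ * ℓ + i.val % ℓ
    rw [Nat.mul_comm (i.val / ℓ) ℓ]
    exact (Nat.div_add_mod _ _).symm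

end Blocks

section Stable

variable {F : Type*} [Field F] {m ℓ : ℕ}

lemma shift_mul_mem (C : Submodule F (Fin (m * ℓ) → F))
    (hqc : ∀ c ∈ C, shiftBy ℓ c ∈ C) {c : Fin (m * ℓ) → F} (hc : c ∈ C) (j : ℕ) :
    shiftBy (j * ℓ) c ∈ C := by
  induction j with
  | zero => simpa [shiftBy_zero] using hc
  | succ j ih =>
      have : shiftBy ((j + 1) * ℓ) c = shiftBy ℓ (shiftBy (j * ℓ) c) := by
        rw [shiftBy_shiftBy]
        congr 1
        ring
      rw [this]
      exact hqc _ ih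

lemma aeval_shift_mem (hm : 0 < m) (D : Submodule F (Fin (m * ℓ) → F))
    (q : Polynomial F) (x : Fin (m * ℓ) → F) (hx : ∀ j : ℕ, shiftBy (j * ℓ) x ∈ D) :
    (Polynomial.aeval (shiftL F (m * ℓ) ℓ) q) x ∈ D := by
  induction q using Polynomial.induction_on' with
  | add p q hp hq =>
      rw [map_add, LinearMap.add_apply]
      exact add_mem hp hq
  | monomial e a =>
      rw [Polynomial.aeval_monomial, Module.End.mul_apply, Module.algebraMap_end_apply,
        shiftL_pow_apply]
      exact Submodule.smul_mem _ _ (hx e)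

end Stable

section Core

lemma qc_core (F : Type*) [Field F] (m ℓ : ℕ) (hm : 0 < m) (hℓ : 0 < ℓ)
    (C : Submodule F (Fin (m * ℓ) → F))
    (hqc : ∀ c ∈ C, shiftBy ℓ c ∈ C) :
    ∃ (d : ℕ) (g : Fin d → (Fin (m * ℓ) → F)),
      d ≤ Module.finrank F (Submodule.map (blockProj F m ℓ ⟨0, hm⟩) C) ∧ (∀ i, g i ∈ C) ∧
      C ≤ Submodule.span F
        {x | ∃ (i : Fin d) (j : Fin m), x = shiftBy (j.val * ℓ) (g i)} := by
  classical
  set W := Submodule.map (blockProj F m ℓ ⟨0, hm⟩) C with hWdef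
  set rW := Module.finrank F W with hrWdef
  let bW : Basis (Fin rW) F W := Module.finBasis F W
  let w : Fin rW → (Fin ℓ → F) := fun i => (bW i : Fin ℓ → F)
  let S : Module.End F (Fin (m * ℓ) → F) := shiftL F (m * ℓ) ℓ
  let Ψ : (Fin rW → Polynomial F) → (Fin (m * ℓ) → F) :=
    fun p => ∑ i, (Polynomial.aeval S (p i)) (blockEmb F m ℓ (w i))
  have stab : ∀ (q : Polynomial F) (c : Fin (m * ℓ) → F), c ∈ C →
      (Polynomial.aeval S q) c ∈ C :=
    fun q c hc => aeval_shift_mem hm C q c (fun j => shift_mul_mem C hqc hc j)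
  have ψ_add : ∀ p q : Fin rW → Polynomial F, Ψ (p + q) = Ψ p + Ψ q := by
    intro p q
    simp only [Ψ, Pi.add_apply, map_add, LinearMap.add_apply, Finset.sum_add_distrib]
  have ψ_zero : Ψ 0 = 0 := by simp [Ψ]
  have ψ_smul : ∀ (q : Polynomial F) (p : Fin rW → Polynomial F),
      Ψ (q • p) = (Polynomial.aeval S q) (Ψ p) := by
    intro q p
    calc Ψ (q • p)
        = ∑ i, (Polynomial.aeval S q) ((Polynomial.aeval S (p i)) (blockEmb F m ℓ (w i))) := by
          simp only [Ψ, Pi.smul_apply, smul_eq_mul, map_mul, Module.End.mul_apply]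
      _ = (Polynomial.aeval S q) (Ψ p) := (map_sum _ _ _).symm
  let M : Submodule (Polynomial F) (Fin rW → Polynomial F) :=
    { carrier := {p | Ψ p ∈ C}
      add_mem' := by
        intro p q hp hq
        show Ψ (p + q) ∈ C
        rw [ψ_add]
        exact add_mem hp hq
      zero_mem' := by
        show Ψ 0 ∈ C
        rw [ψ_zero]
        exact zero_mem C
      smul_mem' := by
        intro q p hp
        show Ψ (q • p) ∈ C
        rw [ψ_smul]
        exact stab q _ hp }
  obtain ⟨d, bM⟩ := Submodule.basisOfPid (Pi.basisFun (Polynomial F) (Fin rW)) M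
  have hd : d ≤ rW := by
    have h1 : Module.rank (Polynomial F) M = d := by
      rw [rank_eq_card_basis bM, Fintype.card_fin]
    have h2 : Module.rank (Polynomial F) M ≤ rW := by
      have h3 := M.rank_le
      rwa [rank_fun', Fintype.card_fin] at h3
    rw [h1] at h2
    exact_mod_cast h2
  refine ⟨d, fun i => Ψ (bM i : Fin rW → Polynomial F), hd, ?_, ?_⟩
  · intro i
    exact (bM i).2
  · intro c hc
    -- surjectivity: c = Ψ p
    have memW : ∀ t : Fin m, blockProj F m ℓ t c ∈ W := by
      intro t
      have h1 : shiftBy (t.val * ℓ) c ∈ C := shift_mul_mem C hqc hc t.val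
      have h2 : blockProj F m ℓ ⟨0, hm⟩ (shiftBy (t.val * ℓ) c) = blockProj F m ℓ t c := by
        funext j
        show shiftBy (t.val * ℓ) c (blockIdx ⟨0, hm⟩ j) = c (blockIdx t j)
        show c ⟨((blockIdx ⟨0, hm⟩ j).val + t.val * ℓ) % (m * ℓ), _⟩ = c (blockIdx t j)
        apply fin_apply_congr
        show (0 * ℓ + j.val + t.val * ℓ) % (m * ℓ) = t.val * ℓ + j.val
        have h3 : 0 * ℓ + j.val + t.val * ℓ = t.val * ℓ + j.val := by ring
        rw [h3]
        exact Nat.mod_eq_of_lt (blockIdx t j).isLt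
      rw [hWdef]
      rw [← h2]
      exact Submodule.mem_map_of_mem h1
    set a : Fin m → Fin rW → F :=
      fun t => bW.equivFun ⟨blockProj F m ℓ t c, memW t⟩ with hadef
    have hrepr : ∀ t : Fin m, (∑ i, a t i • w i) = blockProj F m ℓ t c := by
      intro t
      have h4 := bW.sum_equivFun ⟨blockProj F m ℓ t c, memW t⟩
      have h5 : ((∑ i, bW.equivFun ⟨blockProj F m ℓ t c, memW t⟩ i • bW i : W) : Fin ℓ → F)
          = blockProj F m ℓ t c := congrArg Subtype.val h4
      rw [← h5]
      simp only [AddSubmonoidClass.coe_finset_sum, SetLike.val_smul]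
      rfl
    set p : Fin rW → Polynomial F :=
      fun i => ∑ t : Fin m, Polynomial.C (a t i) * Polynomial.X ^ (m - t.val) with hpdef
    have hcoord : ∀ (i : Fin rW) (t : Fin m) (s : Fin m) (u : Fin ℓ),
        (Polynomial.aeval S (Polynomial.C (a t i) * Polynomial.X ^ (m - t.val)))
          (blockEmb F m ℓ (w i)) (blockIdx s u)
        = a t i * (if s = t then w i u else 0) := by
      intro i t s u
      rw [map_mul, Polynomial.aeval_C, map_pow, Polynomial.aeval_X, Module.End.mul_apply,
        Module.algebraMap_end_apply, Pi.smul_apply]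
      show a t i • ((shiftL F (m * ℓ) ℓ ^ (m - t.val)) (blockEmb F m ℓ (w i))) (blockIdx s u) = _
      rw [shiftL_pow_apply, qc_coord hm]
      simp only [qc_cond_iff hm s.val t.val s.isLt t.isLt, Fin.val_eq_val, smul_eq_mul]
    have hsurj : Ψ p = c := by
      funext idx
      obtain ⟨s, u, rfl⟩ := exists_blockIdx hm hℓ idx
      have h7 : Ψ p (blockIdx s u) = ∑ i, ∑ t, a t i * (if s = t then w i u else 0) := by
        show (∑ i, (Polynomial.aeval S (p i)) (blockEmb F m ℓ (w i))) (blockIdx s u) = _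
        rw [Finset.sum_apply]
        refine Finset.sum_congr rfl fun i _ => ?_
        rw [hpdef]
        rw [map_sum, LinearMap.sum_apply, Finset.sum_apply]
        exact Finset.sum_congr rfl fun t _ => hcoord i t s u
      rw [h7]
      have h8 : ∀ i : Fin rW, ∑ t, a t i * (if s = t then w i u else 0) = a s i * w i u := by
        intro i
        rw [Finset.sum_eq_single s]
        · simp
        · intro t _ hts
          simp [Ne.symm hts]
        · intro h
          exact absurd (Finset.mem_univ s) h
      simp only [h8]
      have h9 := congrFun (hrepr s) u
      rw [Finset.sum_apply] at h9
      simp only [Pi.smul_apply, smul_eq_mul] at h9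
      rw [h9]
      rfl
    have hpM : p ∈ M := by
      show Ψ p ∈ C
      rw [hsurj]
      exact hc
    set q : Fin d → Polynomial F := fun i => bM.equivFun ⟨p, hpM⟩ i with hqdef
    have hpeq : p = ∑ i, q i • (bM i : Fin rW → Polynomial F) := by
      have h10 := bM.sum_equivFun ⟨p, hpM⟩
      have h11 : ((∑ i, bM.equivFun ⟨p, hpM⟩ i • bM i : M) : Fin rW → Polynomial F) = p :=
        congrArg Subtype.val h10
      rw [← h11]
      simp only [AddSubmonoidClass.coe_finset_sum, SetLike.val_smul]
      rfl
    have hc2 : c = ∑ i, (Polynomial.aeval S (q i)) (Ψ (bM i : Fin rW → Polynomial F)) := by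
      rw [← hsurj, hpeq]
      let Ψhom : (Fin rW → Polynomial F) →+ (Fin (m * ℓ) → F) :=
        { toFun := Ψ, map_zero' := ψ_zero, map_add' := ψ_add }
      have h12 : Ψ (∑ i, q i • (bM i : Fin rW → Polynomial F))
          = ∑ i, Ψ (q i • (bM i : Fin rW → Polynomial F)) := map_sum Ψhom _ _
      rw [h12]
      exact Finset.sum_congr rfl fun i _ => ψ_smul (q i) _
    rw [hc2]
    apply Submodule.sum_mem
    intro i _
    apply aeval_shift_mem hm _ (q i)
    intro j
    have harg : (j * ℓ) % (m * ℓ) = (j % m) * ℓ := by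
      have h13 := qc_mod_block (m := m) (ℓ := ℓ) hm j 0 hℓ
      simpa using h13
    rw [shiftBy_mod (j * ℓ), harg]
    exact Submodule.subset_span ⟨i, ⟨j % m, Nat.mod_lt _ hm⟩, rfl⟩

end Core

section Extend

variable {F V : Type*} [Field F] [AddCommGroup V] [Module F V]

lemma qc_extend (C : Submodule F V) [FiniteDimensional F V] :
    ∀ (cnt d r : ℕ), r - d = cnt → d ≤ r → r ≤ Module.finrank F C →
    ∀ u : Fin d → V, (∀ i, u i ∈ C) → LinearIndependent F u →
    ∃ w : Fin r → V, (∀ i, w i ∈ C) ∧ LinearIndependent F w ∧ Set.range u ⊆ Set.range w := by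
  intro cnt
  induction cnt with
  | zero =>
      intro d r hc hdr hrk u hu hind
      have hdr' : d = r := by omega
      subst hdr'
      exact ⟨u, hu, hind, subset_rfl⟩
  | succ cnt ih =>
      intro d r hc hdr hrk u hu hind
      have hx : ∃ x, x ∈ C ∧ x ∉ Submodule.span F (Set.range u) := by
        by_contra hno
        push_neg at hno
        have hle : C ≤ Submodule.span F (Set.range u) := fun x hx => hno x hx
        have h1 : Module.finrank F C ≤ Module.finrank F (Submodule.span F (Set.range u)) :=
          Submodule.finrank_mono hle
        rw [finrank_span_eq_card hind, Fintype.card_fin] at h1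
        omega
      obtain ⟨x, hxC, hxn⟩ := hx
      have hind' : LinearIndependent F (Fin.cons x u : Fin (d + 1) → V) :=
        linearIndependent_fin_cons.2 ⟨hind, hxn⟩
      have hu' : ∀ i, (Fin.cons x u : Fin (d + 1) → V) i ∈ C := by
        intro i
        refine Fin.cases ?_ ?_ i
        · simpa using hxC
        · intro j; simpa using hu j
      obtain ⟨w, hw1, hw2, hw3⟩ := ih (d + 1) r (by omega) (by omega) hrk _ hu' hind'
      refine ⟨w, hw1, hw2, subset_trans ?_ hw3⟩
      rintro y ⟨j, rfl⟩
      exact ⟨j.succ, by simp⟩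

end Extend

section SpanShift

variable {F : Type*} [Field F] {m ℓ : ℕ}

lemma qc_span_mono {ι κ : Type*} (g : ι → (Fin (m * ℓ) → F)) (g' : κ → (Fin (m * ℓ) → F))
    (h : ∀ i, g i ∈ Submodule.span F (Set.range g')) :
    Submodule.span F {x | ∃ (i : ι) (j : Fin m), x = shiftBy (j.val * ℓ) (g i)} ≤
      Submodule.span F {x | ∃ (i : κ) (j : Fin m), x = shiftBy (j.val * ℓ) (g' i)} := by
  rw [Submodule.span_le]
  rintro x ⟨i, j, rfl⟩
  have h1 : shiftBy (j.val * ℓ) (g i) = shiftL F (m * ℓ) (j.val * ℓ) (g i) := rfl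
  rw [h1]
  have h2 : shiftL F (m * ℓ) (j.val * ℓ) (g i) ∈
      Submodule.map (shiftL F (m * ℓ) (j.val * ℓ)) (Submodule.span F (Set.range g')) :=
    Submodule.mem_map_of_mem (h i)
  rw [Submodule.map_span] at h2
  refine Submodule.span_le.2 ?_ h2
  rintro y ⟨z, ⟨i', rfl⟩, rfl⟩
  exact Submodule.subset_span ⟨i', j, rfl⟩

end SpanShift

/-- Let `C` be an `ℓ`-quasi-cyclic code over `F_q` of length `mℓ` with block
rank `r`. Then there exist `r` linearly independent vectors `g_1, …, g_r` of
`C` such that the vectors `T^{jℓ}(g_i)`, `1 ≤ i ≤ r`, `0 ≤ j ≤ m-1`, span `C`. -/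
theorem generator_from_blockRank
    (F : Type*) [Field F] [Fintype F] (m ℓ k r : ℕ)
    (hm : 0 < m) (hℓ : 0 < ℓ) (hk : 0 < k)
    (C : Submodule F (Fin (m * ℓ) → F))
    (hqc : ∀ c ∈ C, shiftBy ℓ c ∈ C)
    (G : Matrix (Fin k) (Fin (m * ℓ)) F)
    (hGind : LinearIndependent F (fun i => G i))
    (hGspan : Submodule.span F (Set.range fun i => G i) = C)
    (hr : ∀ t : Fin m, (G.submatrix id (fun j : Fin ℓ => blockIdx t j)).rank = r) :
    ∃ g : Fin r → (Fin (m * ℓ) → F),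
      (∀ i, g i ∈ C) ∧ LinearIndependent F g ∧
      Submodule.span F
        {x | ∃ (i : Fin r) (j : Fin m), x = shiftBy (j.val * ℓ) (g i)} = C := by
  classical
  have hWr : Module.finrank F (Submodule.map (blockProj F m ℓ ⟨0, hm⟩) C) = r := by
    have h1 : Submodule.map (blockProj F m ℓ ⟨0, hm⟩) C =
        Submodule.span F (Set.range
          (G.submatrix id (fun j : Fin ℓ => blockIdx (⟨0, hm⟩ : Fin m) j))) := by
      rw [← hGspan, Submodule.map_span, ← Set.range_comp]
      rfl
    rw [h1, ← hr ⟨0, hm⟩, Matrix.rank_eq_finrank_span_row]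
    rfl
  obtain ⟨d, g', hd, hg'C, hg'span⟩ := qc_core F m ℓ hm hℓ C hqc
  rw [hWr] at hd
  set U := Submodule.span F (Set.range g') with hUdef
  have hUC : U ≤ C := Submodule.span_le.2 (by rintro x ⟨i, rfl⟩; exact hg'C i)
  have hUfin : Module.finrank F U ≤ d := by
    have h2 := finrank_span_le_card (R := F) (Set.range g')
    have h3 : (Set.range g').toFinset.card ≤ d := by
      rw [Set.toFinset_card]
      simpa using Fintype.card_range_le g'
    exact le_trans h2 h3
  set dU := Module.finrank F U with hdUdef
  let bU : Basis (Fin dU) F U := Module.finBasis F U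
  let ufam : Fin dU → (Fin (m * ℓ) → F) := fun i => (bU i : Fin (m * ℓ) → F)
  have hufamC : ∀ i, ufam i ∈ C := fun i => hUC (bU i).2
  have hufam_ind : LinearIndependent F ufam :=
    bU.linearIndependent.map' U.subtype (Submodule.ker_subtype U)
  have hspanU : Submodule.span F (Set.range ufam) = U := by
    have h4 : Set.range ufam = U.subtype '' Set.range bU := by
      rw [← Set.range_comp]
      rfl
    rw [h4, ← Submodule.map_span, bU.span_eq, Submodule.map_top, Submodule.range_subtype]
  have hCk : Module.finrank F C = k := by
    rw [← hGspan, finrank_span_eq_card hGind, Fintype.card_fin]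
  have hrk : r ≤ k := by
    rw [← hr ⟨0, hm⟩]
    have h5 := Matrix.rank_le_card_height (G.submatrix id
      (fun j : Fin ℓ => blockIdx (⟨0, hm⟩ : Fin m) j))
    simpa using h5
  obtain ⟨w, hwC, hwind, hwsub⟩ := qc_extend C (r - dU) dU r rfl
    (le_trans hUfin hd) (by rw [hCk]; exact hrk) ufam hufamC hufam_ind
  refine ⟨w, hwC, hwind, ?_⟩
  apply le_antisymm
  · rw [Submodule.span_le]
    rintro x ⟨i, j, rfl⟩
    exact shift_mul_mem C hqc (hwC i) j.val
  · intro c hc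
    have step1 := hg'span hc
    have step2 := qc_span_mono g' ufam (fun i => by
      rw [hspanU]
      exact Submodule.subset_span ⟨i, rfl⟩)
    have step3 := qc_span_mono ufam w (fun i => Submodule.subset_span (hwsub ⟨i, rfl⟩))
    exact step3 (step2 step1)
end

section
/- Let C be an ℓ-quasi-cyclic code of length mℓ over F_q, P(X) = Σ P_i X^i a generator polynomial of C and Q(X) = Σ Q_i X^i a generator polynomial of its dual C^⊥. Then P(X)·(^tQ*(X)) ≡ 0 (mod X^m − 1) in M_ℓ(F_q)[X], where Q* is the reciprocal polynomial of Q and ^tQ is obtained by transposing each matrix coefficient of Q. -/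
open Polynomial Matrix

/-- The vector of `F_q^{mℓ}` formed by the `t`-th rows of the matrix
coefficients `P_0, P_1, …, P_{m-1}`. -/
def rowVec {F : Type*} [Field F] {m ℓ : ℕ} (hℓ : 0 < ℓ)
    (P : Fin m → Matrix (Fin ℓ) (Fin ℓ) F) (t : Fin ℓ) : Fin (m * ℓ) → F :=
  fun idx =>
    P ⟨idx.val / ℓ, by
        have h := idx.isLt
        exact Nat.div_lt_of_lt_mul (lt_of_lt_of_eq h (Nat.mul_comm m ℓ))⟩
      t ⟨idx.val % ℓ, Nat.mod_lt _ hℓ⟩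

lemma fin_rev_eq_neg_one_sub {m : ℕ} [NeZero m] (k : Fin m) : k.rev = -1 - k := by
  rcases m with _ | m
  · exact absurd rfl (NeZero.ne 0)
  · rw [← Fin.last_sub]
    congr 1
    rw [← neg_neg (Fin.last m), Fin.neg_last]

/-- The shear-and-reverse self-equivalence of `Fin m × Fin m`. -/
def shearEquiv (m : ℕ) [NeZero m] : Fin m × Fin m ≃ Fin m × Fin m where
  toFun p := (p.1 + 1 + p.2, p.2.rev)
  invFun p := (p.1 - 1 - p.2.rev, p.2.rev)
  left_inv := fun p => by
    obtain ⟨r, k⟩ := p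
    simp only [Fin.rev_rev, Prod.mk.injEq]
    exact ⟨by abel, trivial⟩
  right_inv := fun p => by
    obtain ⟨i, i'⟩ := p
    simp only [Fin.rev_rev, Prod.mk.injEq]
    exact ⟨by abel, trivial⟩

lemma nat_idx_mod {m ℓ : ℕ} (hm : 0 < m) (hℓ : 0 < ℓ) {u i : ℕ} (j : ℕ)
    (hu : u < ℓ) :
    (u + ℓ * i + j * ℓ) % (m * ℓ) = u + ℓ * ((i + j) % m) := by
  have h1 : u + ℓ * i + j * ℓ = u + ℓ * ((i + j) % m) + (m * ℓ) * ((i + j) / m) := by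
    calc u + ℓ * i + j * ℓ = u + ℓ * (i + j) := by ring
      _ = u + ℓ * ((i + j) % m + m * ((i + j) / m)) := by rw [Nat.mod_add_div]
      _ = u + ℓ * ((i + j) % m) + (m * ℓ) * ((i + j) / m) := by ring
  rw [h1, Nat.add_mul_mod_self_left]
  apply Nat.mod_eq_of_lt
  have hr : (i + j) % m < m := Nat.mod_lt _ hm
  calc u + ℓ * ((i + j) % m) < ℓ + ℓ * ((i + j) % m) := by omega
    _ = ℓ * ((i + j) % m + 1) := by ring
    _ ≤ ℓ * m := Nat.mul_le_mul_left _ (by omega)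
    _ = m * ℓ := Nat.mul_comm _ _

lemma pow_eq_mod_add {R : Type*} [Ring R] {m : ℕ} (hm : 0 < m) (a : ℕ) :
    ∃ g : Polynomial R, (X : Polynomial R) ^ a = X ^ (a % m) + (X ^ m - 1) * g := by
  induction a using Nat.strong_induction_on with
  | _ a ih =>
    by_cases h : a < m
    · exact ⟨0, by rw [Nat.mod_eq_of_lt h, mul_zero, add_zero]⟩
    · push_neg at h
      obtain ⟨g, hg⟩ := ih (a - m) (by omega)
      refine ⟨X ^ (a - m) + g, ?_⟩
      have h2 : (X : Polynomial R) ^ a = X ^ m * X ^ (a - m) := by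
        rw [← pow_add]; congr 1; omega
      have h3 : (X : Polynomial R) ^ ((a - m) % m) = X ^ (a - m) - (X ^ m - 1) * g :=
        eq_sub_of_add_eq hg.symm
      rw [h2, Nat.mod_eq_sub_mod h, h3]
      noncomm_ring

/-- Let `P(X)` be a generator polynomial of an `ℓ`-quasi-cyclic code `C` of
length `mℓ` and `Q(X)` a generator polynomial of its dual. Then
`P(X)·(ᵗQ*(X)) ≡ 0 (mod X^m - 1)`, where `Q*` is the reciprocal polynomial of
`Q` and `ᵗQ` has the transposed matrix coefficients. -/
theorem generator_poly_dual_key_equation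
    (F : Type*) [Field F] [Fintype F] (m ℓ : ℕ) (hm : 0 < m) (hℓ : 0 < ℓ)
    (C : Submodule F (Fin (m * ℓ) → F))
    (hqc : ∀ c ∈ C, shiftBy ℓ c ∈ C)
    (P Q : Fin m → Matrix (Fin ℓ) (Fin ℓ) F)
    (hP : Submodule.span F
      {x | ∃ (t : Fin ℓ) (j : Fin m), x = shiftBy (j.val * ℓ) (rowVec hℓ P t)} = C)
    (hQ : (Submodule.span F
        {x | ∃ (t : Fin ℓ) (j : Fin m), x = shiftBy (j.val * ℓ) (rowVec hℓ Q t)} :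
        Set (Fin (m * ℓ) → F)) =
      {x | ∀ c ∈ C, ∑ i : Fin (m * ℓ), x i * c i = 0}) :
    ∃ h : Polynomial (Matrix (Fin ℓ) (Fin ℓ) F),
      (∑ i : Fin m, Polynomial.C (P i) * Polynomial.X ^ i.val) *
        (∑ i : Fin m, Polynomial.C (Matrix.transpose (Q i.rev)) * Polynomial.X ^ i.val) =
      ((Polynomial.X : Polynomial (Matrix (Fin ℓ) (Fin ℓ) F)) ^ m - 1) * h := by
  haveI : NeZero m := ⟨hm.ne'⟩
  -- the rows of P lie in C
  have hC : ∀ s : Fin ℓ, rowVec hℓ P s ∈ C := by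
    intro s
    rw [← hP]
    refine Submodule.subset_span ⟨s, ⟨0, hm⟩, ?_⟩
    funext idx
    show rowVec hℓ P s idx = rowVec hℓ P s ⟨(idx.val + 0 * ℓ) % (m * ℓ), _⟩
    congr 1
    ext
    simp [Nat.mod_eq_of_lt idx.isLt]
  -- key orthogonality relation, entrywise
  have key0 : ∀ (j : Fin m) (s t : Fin ℓ),
      ∑ p : Fin m × Fin ℓ, P p.1 s p.2 * Q (p.1 + j) t p.2 = 0 := by
    intro j s t
    have hx : shiftBy (j.val * ℓ) (rowVec hℓ Q t) ∈ (Submodule.span F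
        {x | ∃ (t' : Fin ℓ) (j' : Fin m), x = shiftBy (j'.val * ℓ) (rowVec hℓ Q t')} :
        Set (Fin (m * ℓ) → F)) :=
      Submodule.subset_span ⟨t, j, rfl⟩
    rw [hQ] at hx
    have heq := hx (rowVec hℓ P s) (hC s)
    have hsum := Fintype.sum_equiv (finProdFinEquiv : Fin m × Fin ℓ ≃ Fin (m * ℓ))
      (fun p : Fin m × Fin ℓ => P p.1 s p.2 * Q (p.1 + j) t p.2)
      (fun idx => shiftBy (j.val * ℓ) (rowVec hℓ Q t) idx * rowVec hℓ P s idx) ?_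
    · exact hsum.trans heq
    · rintro ⟨i, u⟩
      show P i s u * Q (i + j) t u
        = shiftBy (j.val * ℓ) (rowVec hℓ Q t) (finProdFinEquiv (i, u))
          * rowVec hℓ P s (finProdFinEquiv (i, u))
      have hval : ((finProdFinEquiv : Fin m × Fin ℓ ≃ Fin (m * ℓ)) (i, u)).val
          = u.val + ℓ * i.val := rfl
      have hmod : (u.val + ℓ * i.val + j.val * ℓ) % (m * ℓ)
          = u.val + ℓ * ((i.val + j.val) % m) := nat_idx_mod hm hℓ j.val u.isLt
      have hdiv : (u.val + ℓ * ((i.val + j.val) % m)) / ℓ = (i.val + j.val) % m := by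
        rw [Nat.add_mul_div_left _ _ hℓ, Nat.div_eq_of_lt u.isLt, Nat.zero_add]
      have hmod2 : (u.val + ℓ * ((i.val + j.val) % m)) % ℓ = u.val := by
        rw [Nat.add_mul_mod_self_left, Nat.mod_eq_of_lt u.isLt]
      have hdiv2 : (u.val + ℓ * i.val) / ℓ = i.val := by
        rw [Nat.add_mul_div_left _ _ hℓ, Nat.div_eq_of_lt u.isLt, Nat.zero_add]
      have hmod3 : (u.val + ℓ * i.val) % ℓ = u.val := by
        rw [Nat.add_mul_mod_self_left, Nat.mod_eq_of_lt u.isLt]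
      simp only [shiftBy, rowVec, hval, hmod]
      rw [mul_comm]
      congr 1
      · congr 1
        · ext; rw [Fin.val_add]; exact hdiv.symm
        · ext; exact hmod2.symm
      · congr 1
        · ext; exact hdiv2.symm
        · ext; exact hmod3.symm
  -- matrix form of the key relation
  have key : ∀ j : Fin m, ∑ i : Fin m, P i * (Q (i + j))ᵀ = 0 := by
    intro j
    ext s t
    rw [Matrix.sum_apply]
    simp only [Matrix.mul_apply, Matrix.transpose_apply, Matrix.zero_apply]
    calc ∑ i : Fin m, ∑ u : Fin ℓ, P i s u * Q (i + j) t u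
        = ∑ p : Fin m × Fin ℓ, P p.1 s p.2 * Q (p.1 + j) t p.2 :=
          (Fintype.sum_prod_type
            (fun p : Fin m × Fin ℓ => P p.1 s p.2 * Q (p.1 + j) t p.2)).symm
      _ = 0 := key0 j s t
  -- re-indexed key relation
  have key2 : ∀ j : Fin m, ∑ k : Fin m, P (j + k) * (Q k)ᵀ = 0 := by
    intro j
    have hk := key (-j)
    rw [← hk]
    refine Fintype.sum_equiv (Equiv.addLeft j) _ _ ?_
    intro k
    show P (j + k) * (Q k)ᵀ = P (j + k) * (Q (j + k + -j))ᵀ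
    rw [show j + k + -j = k by abel]
  -- choose the correction polynomials
  choose g hg using fun a => pow_eq_mod_add (R := Matrix (Fin ℓ) (Fin ℓ) F) hm a
  refine ⟨∑ p : Fin m × Fin m,
    Polynomial.C (P p.1 * (Q p.2.rev)ᵀ) * g (p.1.val + p.2.val), ?_⟩
  have expand : (∑ i : Fin m, Polynomial.C (P i) * Polynomial.X ^ i.val) *
        (∑ i : Fin m, Polynomial.C ((Q i.rev)ᵀ) * Polynomial.X ^ i.val)
      = ∑ p : Fin m × Fin m,
          Polynomial.C (P p.1 * (Q p.2.rev)ᵀ) * Polynomial.X ^ (p.1.val + p.2.val) := by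
    calc (∑ i : Fin m, Polynomial.C (P i) * Polynomial.X ^ i.val) *
          (∑ i : Fin m, Polynomial.C ((Q i.rev)ᵀ) * Polynomial.X ^ i.val)
        = ∑ i : Fin m, ∑ i' : Fin m,
            (Polynomial.C (P i) * X ^ i.val) * (Polynomial.C ((Q i'.rev)ᵀ) * X ^ i'.val) :=
          Finset.sum_mul_sum _ _ _ _
      _ = ∑ i : Fin m, ∑ i' : Fin m,
            Polynomial.C (P i * (Q i'.rev)ᵀ) * X ^ (i.val + i'.val) := by
          refine Finset.sum_congr rfl fun i _ => Finset.sum_congr rfl fun i' _ => ?_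
          rw [mul_assoc, ← mul_assoc (X ^ i.val), X_pow_mul, mul_assoc, ← pow_add,
            ← mul_assoc, ← Polynomial.C_mul]
      _ = ∑ p : Fin m × Fin m,
            Polynomial.C (P p.1 * (Q p.2.rev)ᵀ) * X ^ (p.1.val + p.2.val) :=
          (Fintype.sum_prod_type (fun p : Fin m × Fin m =>
            Polynomial.C (P p.1 * (Q p.2.rev)ᵀ) * X ^ (p.1.val + p.2.val))).symm
  rw [expand]
  have term_eq : ∀ p : Fin m × Fin m,
      Polynomial.C (P p.1 * (Q p.2.rev)ᵀ) * Polynomial.X ^ (p.1.val + p.2.val)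
        = Polynomial.C (P p.1 * (Q p.2.rev)ᵀ) * Polynomial.X ^ ((p.1.val + p.2.val) % m)
          + ((X : Polynomial (Matrix (Fin ℓ) (Fin ℓ) F)) ^ m - 1) *
            (Polynomial.C (P p.1 * (Q p.2.rev)ᵀ) * g (p.1.val + p.2.val)) := by
    intro p
    have hcomm : Commute (Polynomial.C (P p.1 * (Q p.2.rev)ᵀ))
        ((X : Polynomial (Matrix (Fin ℓ) (Fin ℓ) F)) ^ m - 1) :=
      ((Polynomial.commute_X _).symm.pow_right m).sub_right (Commute.one_right _)
    rw [hg (p.1.val + p.2.val), mul_add]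
    congr 1
    rw [← mul_assoc, hcomm.eq, mul_assoc]
  simp only [term_eq]
  rw [Finset.sum_add_distrib, ← Finset.mul_sum]
  have main_zero : ∑ p : Fin m × Fin m,
      Polynomial.C (P p.1 * (Q p.2.rev)ᵀ) * Polynomial.X ^ ((p.1.val + p.2.val) % m) = 0 := by
    have hsum := Fintype.sum_equiv (shearEquiv m)
      (fun p : Fin m × Fin m =>
        Polynomial.C (P (p.1 + 1 + p.2) * (Q p.2)ᵀ) * Polynomial.X ^ p.1.val)
      (fun p : Fin m × Fin m =>
        Polynomial.C (P p.1 * (Q p.2.rev)ᵀ) * Polynomial.X ^ ((p.1.val + p.2.val) % m)) ?_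
    · rw [← hsum]
      calc (∑ p : Fin m × Fin m,
            Polynomial.C (P (p.1 + 1 + p.2) * (Q p.2)ᵀ) * Polynomial.X ^ p.1.val)
          = ∑ r : Fin m, ∑ k : Fin m,
              Polynomial.C (P (r + 1 + k) * (Q k)ᵀ) * Polynomial.X ^ r.val :=
            Fintype.sum_prod_type (fun p : Fin m × Fin m =>
              Polynomial.C (P (p.1 + 1 + p.2) * (Q p.2)ᵀ) * Polynomial.X ^ p.1.val)
        _ = 0 := by
            refine Finset.sum_eq_zero fun r _ => ?_
            rw [← Finset.sum_mul, ← map_sum, key2 (r + 1), map_zero, zero_mul]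
    · rintro ⟨r, k⟩
      have hrk : (r + 1 + k) + k.rev = r := by rw [fin_rev_eq_neg_one_sub]; abel
      have hexp : ((r + 1 + k).val + k.rev.val) % m = r.val := by rw [← Fin.val_add, hrk]
      show Polynomial.C (P (r + 1 + k) * (Q k)ᵀ) * Polynomial.X ^ r.val
        = Polynomial.C (P (r + 1 + k) * (Q k.rev.rev)ᵀ)
            * Polynomial.X ^ (((r + 1 + k).val + k.rev.val) % m)
      rw [Fin.rev_rev, hexp]
  rw [main_zero, zero_add]
end

section
/- Let q be a prime power and suppose q^{sℓ} − 1 = m. Then there exists a matrix A ∈ M_ℓ(F_{q^s}) which is a primitive m-th root of unity, i.e., A^m = I_ℓ, A^i ≠ I_ℓ for 0 < i < m, and det(A^i − A^j) ≠ 0 whenever i ≢ j (mod m). -/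
open Polynomial

lemma card_splittingField (K : Type*) [Field K] [Fintype K] (ℓ : ℕ) (hℓ : 0 < ℓ)
    [Fintype (SplittingField (X ^ Fintype.card K ^ ℓ - X : K[X]))] :
    Fintype.card (SplittingField (X ^ Fintype.card K ^ ℓ - X : K[X])) =
      Fintype.card K ^ ℓ := by
  set q := Fintype.card K with hq
  set L := SplittingField (X ^ q ^ ℓ - X : K[X])
  set g : K[X] := X ^ q ^ ℓ - X with hg
  haveI : CharP K (ringChar K) := ringChar.charP K
  obtain ⟨n, hp, hcard⟩ := FiniteField.card K (ringChar K)
  set p := ringChar K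
  have hq1 : 1 < q := Fintype.one_lt_card
  have hqℓ1 : 1 < q ^ ℓ := one_lt_pow₀ hq1 hℓ.ne'
  have hpq : p ∣ q ^ ℓ := by
    have : p ∣ q := by rw [hq, hcard]; exact dvd_pow_self p n.pos.ne'
    exact dvd_pow this hℓ.ne'
  haveI : CharP L p := (Algebra.charP_iff K L p).mp ‹_›
  have hsep : g.Separable := galois_poly_separable p (q ^ ℓ) hpq
  have aux : g ≠ 0 := FiniteField.X_pow_card_pow_sub_X_ne_zero K hℓ.ne' hq1
  have key : Fintype.card (g.rootSet L) = g.natDegree :=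
    card_rootSet_eq_natDegree hsep (SplittingField.splits g)
  have nat_degree_eq : g.natDegree = q ^ ℓ := by
    have := FiniteField.X_pow_card_pow_sub_X_natDegree_eq K hℓ.ne' hq1
    simpa [hg] using this
  rw [nat_degree_eq] at key
  suffices huniv : g.rootSet L = Set.univ by
    simp_rw [huniv, ← Fintype.ofEquiv_card (Equiv.Set.univ _)] at key
    convert key using 2
  rw [Set.eq_univ_iff_forall]
  suffices ∀ (x) (_ : x ∈ (⊤ : Subalgebra K L)), x ∈ g.rootSet L by simpa
  rw [← SplittingField.adjoin_rootSet]
  simp_rw [Algebra.mem_adjoin_iff]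
  intro x hx
  haveI : Fact p.Prime := ⟨hp⟩
  refine Subring.closure_induction ?_ ?_ ?_ ?_ ?_ ?_ hx <;> simp_rw [mem_rootSet_of_ne aux]
  · rintro x (⟨r, rfl⟩ | hx)
    · simp only [hg, map_sub, map_pow, aeval_X]
      rw [← map_pow, FiniteField.pow_card_pow, sub_self]
    · rwa [mem_rootSet_of_ne aux] at hx
  · rw [← coeff_zero_eq_aeval_zero']
    simp only [hg, coeff_X_pow, coeff_X_zero, sub_zero, _root_.map_eq_zero, ite_eq_right_iff,
      one_ne_zero, coeff_sub]
    intro hn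
    exact absurd hn.symm (by positivity)
  · simp [hg, one_pow]
  · simp only [hg, aeval_X_pow, aeval_X, map_sub, sub_eq_zero]
    obtain ⟨c, hc⟩ : ∃ c, q ^ ℓ = p ^ c :=
      ⟨(n : ℕ) * ℓ, by rw [hq, hcard, ← pow_mul]⟩
    have hstep : ∀ z : L, z ^ q ^ ℓ = z ^ p ^ c := fun z => congrArg (fun t => z ^ t) hc
    intro x y _ _ hx hy
    rw [hstep] at hx hy ⊢
    rw [add_pow_char_pow, hx, hy]
  · simp only [hg, aeval_X_pow, aeval_X, map_sub, sub_eq_zero]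
    obtain ⟨c, hc⟩ : ∃ c, q ^ ℓ = p ^ c :=
      ⟨(n : ℕ) * ℓ, by rw [hq, hcard, ← pow_mul]⟩
    have hstep : ∀ z : L, z ^ q ^ ℓ = z ^ p ^ c := fun z => congrArg (fun t => z ^ t) hc
    intro x _ hx
    rw [hstep] at hx ⊢
    rw [neg_pow, hx, neg_one_pow_char_pow]
    exact neg_one_mul x
  · simp only [hg, aeval_X_pow, aeval_X, map_sub, mul_pow, sub_eq_zero]
    intro x y _ _ hx hy
    rw [hx, hy]



/-- Let `K = F_{q^s}` and suppose `q^{sℓ} - 1 = m`, i.e. `m + 1 = |K|^ℓ`. Then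
there exists a primitive `m`-th root of unity in `M_ℓ(K)`: a matrix `A` with
`A^m = I`, `A^i ≠ I` for `0 < i < m`, and `det(A^i - A^j) ≠ 0` for `i ≠ j`. -/
theorem exists_primitive_root_matrix
    (K : Type*) [Field K] [Fintype K] (ℓ m : ℕ) (hℓ : 0 < ℓ)
    (hm : m + 1 = Fintype.card K ^ ℓ) :
    ∃ A : Matrix (Fin ℓ) (Fin ℓ) K,
      A ^ m = 1 ∧
      (∀ i : ℕ, 0 < i → i < m → A ^ i ≠ 1) ∧
      (∀ i j : ℕ, i < m → j < m → i ≠ j → (A ^ i - A ^ j).det ≠ 0) := by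
  classical
  set q := Fintype.card K with hq
  set L := SplittingField (X ^ q ^ ℓ - X : K[X]) with hL
  haveI : Finite L := Module.finite_of_finite K
  haveI : Fintype L := Fintype.ofFinite _
  have hcardL : Fintype.card L = q ^ ℓ := card_splittingField K ℓ hℓ
  have hq1 : 1 < q := Fintype.one_lt_card
  have hrank : Module.finrank K L = ℓ := by
    have h2 : Fintype.card L = q ^ Module.finrank K L := Module.card_eq_pow_finrank
    rw [hcardL] at h2
    exact (Nat.pow_right_injective hq1 h2.symm)
  let b : Module.Basis (Fin ℓ) K L := Module.finBasisOfFinrankEq K L hrank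
  obtain ⟨g, hgen⟩ := IsCyclic.exists_generator (α := Lˣ)
  have hordg : orderOf g = m := by
    rw [orderOf_eq_card_of_forall_mem_zpowers hgen, Nat.card_eq_fintype_card,
      Fintype.card_units, hcardL]
    omega
  set α : L := (g : L) with hα
  have hordα : orderOf α = m := by rw [hα, orderOf_units, hordg]
  have hpow : ∀ i : ℕ, (Algebra.leftMulMatrix b α) ^ i = Algebra.leftMulMatrix b (α ^ i) :=
    fun i => (map_pow _ _ _).symm
  refine ⟨Algebra.leftMulMatrix b α, ?_, ?_, ?_⟩
  · rw [hpow, ← hordα, pow_orderOf_eq_one, map_one]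
  · intro i h0 hi hEq
    rw [hpow] at hEq
    have h1 : α ^ i = 1 := Algebra.leftMulMatrix_injective b (hEq.trans (map_one _).symm)
    exact absurd (hordα ▸ orderOf_le_of_pow_eq_one h0 h1) (not_le.mpr hi)
  · intro i j hi hj hij hdet
    rw [hpow, hpow, ← map_sub, ← Algebra.norm_eq_matrix_det b] at hdet
    have hne : α ^ i - α ^ j ≠ 0 := sub_ne_zero.mpr fun h =>
      hij (pow_injOn_Iio_orderOf (by simpa [hordα] using hi) (by simpa [hordα] using hj) h)
    exact (Algebra.norm_ne_zero_iff.mpr hne) hdet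
end

section
/- Let A ∈ M_ℓ(F_{q^s}) be a primitive m-th root of unity and δ ≤ m. The quasi-BCH code QBCH_q(m, ℓ, δ, A) = {(c_1,...,c_m) ∈ (F_q^ℓ)^m : Σ_{j=0}^{m−1} A^{ij} c_{j+1} = 0 for i = 1,...,δ−1} is an F_q-linear code of length mℓ, dimension at least (m − s(δ−1))ℓ, and ℓ-block minimum distance at least δ. -/
open Matrix Module

lemma vander_aux {ℓ : ℕ} {E : Type*} [Field E] :
    ∀ (w : ℕ) (B : Fin w → Matrix (Fin ℓ) (Fin ℓ) E) (v : Fin w → Fin ℓ → E),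
    (∀ k k', B k * B k' = B k' * B k) →
    (∀ k, IsUnit (B k)) →
    (∀ k k', k ≠ k' → IsUnit (B k - B k')) →
    (∀ i : ℕ, 1 ≤ i → i ≤ w → ∑ k, ((B k) ^ i).mulVec (v k) = 0) →
    ∀ k, v k = 0 := by
  intro w
  induction w with
  | zero => exact fun B v _ _ _ _ k => k.elim0
  | succ w ih =>
    intro B v hcomm hunit hdiff heq
    set Bl := B (Fin.last w) with hBl
    set u : Fin w → Fin ℓ → E :=
      fun k => (B k.castSucc - Bl).mulVec (v k.castSucc) with hu
    have key : ∀ i : ℕ, 1 ≤ i → i ≤ w →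
        ∑ k : Fin w, ((B k.castSucc) ^ i).mulVec (u k) = 0 := by
      intro i h1 h2
      have e1 := heq i h1 (by omega)
      have e2 := heq (i+1) (by omega) (by omega)
      rw [Fin.sum_univ_castSucc] at e1 e2
      have term : ∀ k : Fin w, ((B k.castSucc) ^ i).mulVec (u k)
          = ((B k.castSucc) ^ (i+1)).mulVec (v k.castSucc)
            - Bl.mulVec (((B k.castSucc) ^ i).mulVec (v k.castSucc)) := by
        intro k
        have hc : (B k.castSucc) ^ i * Bl = Bl * (B k.castSucc) ^ i := by
          have : Commute (B k.castSucc) Bl := hcomm _ _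
          exact (this.pow_left i).eq
        rw [hu]
        rw [Matrix.mulVec_mulVec, Matrix.mul_sub, ← pow_succ, hc,
          Matrix.sub_mulVec, ← Matrix.mulVec_mulVec]
      rw [Finset.sum_congr rfl (fun k _ => term k), Finset.sum_sub_distrib]
      have hsum : ∑ k : Fin w, Bl.mulVec (((B k.castSucc) ^ i).mulVec (v k.castSucc))
          = Bl.mulVec (∑ k : Fin w, ((B k.castSucc) ^ i).mulVec (v k.castSucc)) := by
        exact (map_sum Bl.mulVecLin _ _).symm
      rw [hsum]
      have e1' : ∑ k : Fin w, ((B k.castSucc) ^ i).mulVec (v k.castSucc)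
          = - (Bl ^ i).mulVec (v (Fin.last w)) := by
        rw [eq_neg_iff_add_eq_zero]; exact e1
      have e2' : ∑ k : Fin w, ((B k.castSucc) ^ (i+1)).mulVec (v k.castSucc)
          = - (Bl ^ (i+1)).mulVec (v (Fin.last w)) := by
        rw [eq_neg_iff_add_eq_zero]; exact e2
      rw [e1', e2', Matrix.mulVec_neg, Matrix.mulVec_mulVec, ← pow_succ']
      simp
    have hu0 : ∀ k : Fin w, u k = 0 :=
      ih (fun k => B k.castSucc) u
        (fun k k' => hcomm _ _) (fun k => hunit _)
        (fun k k' hkk' => hdiff _ _ (by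
          simp only [ne_eq, Fin.castSucc_inj]; exact hkk')) key
    have hvc : ∀ k : Fin w, v k.castSucc = 0 := by
      intro k
      have hinj : Function.Injective (B k.castSucc - Bl).mulVec :=
        Matrix.mulVec_injective_iff_isUnit.mpr
          (hdiff _ _ (Fin.castSucc_lt_last k).ne)
      have : (B k.castSucc - Bl).mulVec (v k.castSucc)
          = (B k.castSucc - Bl).mulVec 0 := by
        rw [Matrix.mulVec_zero]; exact hu0 k
      exact hinj this
    have hlast : v (Fin.last w) = 0 := by
      have e1 := heq 1 le_rfl (by omega)
      rw [Fin.sum_univ_castSucc] at e1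
      have : ∀ k : Fin w, ((B k.castSucc) ^ 1).mulVec (v k.castSucc) = 0 := by
        intro k; rw [hvc k, Matrix.mulVec_zero]
      rw [Finset.sum_congr rfl (fun k _ => this k), Finset.sum_const_zero,
        zero_add] at e1
      have hinj : Function.Injective ((B (Fin.last w)) ^ 1).mulVec :=
        Matrix.mulVec_injective_iff_isUnit.mpr ((hunit _).pow 1)
      have := hinj (by rw [e1, Matrix.mulVec_zero] : _ = ((B (Fin.last w))^1).mulVec 0)
      exact this
    intro k
    rcases Fin.eq_castSucc_or_eq_last k with ⟨k', rfl⟩ | rfl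
    · exact hvc k'
    · exact hlast

/-- The quasi-BCH code `QBCH_q(m, ℓ, δ, A)` defined by a primitive `m`-th root
of unity `A ∈ M_ℓ(F_{q^s})` is an `F_q`-linear code of length `mℓ`, dimension
at least `(m - s(δ-1))ℓ`, and `ℓ`-block minimum distance at least `δ`. -/
theorem quasiBCH_parameters
    (F E : Type*) [Field F] [Fintype F] [Field E] [Algebra F E]
    [FiniteDimensional F E]
    (m ℓ s δ : ℕ) (hs : Module.finrank F E = s)
    (hm : 0 < m) (hℓ : 0 < ℓ) (hδ : δ ≤ m)
    (A : Matrix (Fin ℓ) (Fin ℓ) E)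
    (hA1 : A ^ m = 1)
    (hA2 : ∀ i : ℕ, 0 < i → i < m → A ^ i ≠ 1)
    (hA3 : ∀ i j : ℕ, i < m → j < m → i ≠ j → IsUnit (A ^ i - A ^ j)) :
    ∃ C : Submodule F (Fin m → Fin ℓ → F),
      (∀ c, c ∈ C ↔ ∀ i : ℕ, 1 ≤ i → i ≤ δ - 1 →
        ∑ j : Fin m, (A ^ (i * j.val)).mulVec (fun t => algebraMap F E (c j t)) = 0) ∧
      (m - s * (δ - 1)) * ℓ ≤ Module.finrank F C ∧
      (∀ c ∈ C, c ≠ 0 → δ ≤ Nat.card {j : Fin m // c j ≠ 0}) := by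
  classical
  set φ : (Fin m → Fin ℓ → F) →ₗ[F] (Fin (δ-1) → Fin ℓ → E) :=
    { toFun := fun c i => ∑ j : Fin m,
        (A ^ ((i.val+1) * j.val)).mulVec (fun t => algebraMap F E (c j t))
      map_add' := by
        intro x y
        funext i t
        simp only [Pi.add_apply, map_add, Finset.sum_apply]
        rw [← Finset.sum_add_distrib]
        refine Finset.sum_congr rfl fun j _ => ?_
        simp [Matrix.mulVec, dotProduct, mul_add, Finset.sum_add_distrib]
      map_smul' := by
        intro a x
        funext i t
        simp only [Pi.smul_apply, RingHom.id_apply, Finset.sum_apply,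
          Algebra.smul_def, _root_.map_mul, Finset.mul_sum]
        refine Finset.sum_congr rfl fun j _ => ?_
        simp [Matrix.mulVec, dotProduct, Finset.mul_sum, mul_left_comm] } with hφ
  refine ⟨LinearMap.ker φ, fun c => ?_, ?_, ?_⟩
  · constructor
    · intro hc i h1 h2
      have := congrFun (LinearMap.mem_ker.mp hc) ⟨i - 1, by omega⟩
      simpa [hφ, Nat.sub_add_cancel h1] using this
    · intro h
      rw [LinearMap.mem_ker]
      funext i
      exact h (i.val + 1) (by omega) (by omega)
  · -- dimension bound
    have hrn := LinearMap.finrank_range_add_finrank_ker φ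
    have hdom : finrank F (Fin m → Fin ℓ → F) = m * ℓ := by
      rw [Module.finrank_pi_fintype]
      simp [Module.finrank_pi]
    have hcod : finrank F (Fin (δ-1) → Fin ℓ → E) = s * (δ - 1) * ℓ := by
      rw [Module.finrank_pi_fintype]
      have : finrank F (Fin ℓ → E) = ℓ * s := by
        rw [Module.finrank_pi_fintype]
        simp [hs, Nat.mul_comm]
      simp [this]; ring
    have hR : finrank F (LinearMap.range φ) ≤ s * (δ - 1) * ℓ := by
      rw [← hcod]
      exact (LinearMap.range φ).finrank_le
    rw [hdom] at hrn
    rw [Nat.sub_mul]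
    have : finrank F (LinearMap.ker φ) = m * ℓ - finrank F (LinearMap.range φ) := by
      omega
    rw [this]
    exact Nat.sub_le_sub_left hR _
  · -- distance bound
    intro c hc hc0
    by_contra hlt
    push_neg at hlt
    set S := {j : Fin m // c j ≠ 0} with hS
    have : Nat.card S = Fintype.card S := Nat.card_eq_fintype_card
    set w := Nat.card S with hw
    have hwδ : w ≤ δ - 1 := by omega
    have e : Fin w ≃ S := (finCongr this).trans (Fintype.equivFin S).symm
    have heqn : ∀ i : ℕ, 1 ≤ i → i ≤ δ - 1 →
        ∑ j : Fin m, (A ^ (i * j.val)).mulVec (fun t => algebraMap F E (c j t)) = 0 := by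
      intro i h1 h2
      have := congrFun (LinearMap.mem_ker.mp hc) ⟨i - 1, by omega⟩
      simpa [hφ, Nat.sub_add_cancel h1] using this
    have hres : ∀ i : ℕ, 1 ≤ i → i ≤ δ - 1 →
        ∑ k : Fin w, (A ^ (i * ((e k : Fin m) : ℕ))).mulVec
          (fun t => algebraMap F E (c (e k) t)) = 0 := by
      intro i h1 h2
      have h0 := heqn i h1 h2
      set f : Fin m → Fin ℓ → E :=
        fun j => (A ^ (i * j.val)).mulVec (fun t => algebraMap F E (c j t)) with hf
      calc ∑ k : Fin w, f (e k) = ∑ x : S, f x.val := Equiv.sum_comp e (fun x => f x.val)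
        _ = ∑ j ∈ Finset.univ.filter (fun j => c j ≠ 0), f j :=
            (Finset.sum_subtype _ (by simp) f).symm
        _ = ∑ j, f j := Finset.sum_filter_of_ne (by
            intro j _ hfj
            contrapose! hfj
            have hcj : c j = 0 := hfj
            have : (fun t => algebraMap F E (c j t)) = (0 : Fin ℓ → E) := by
              funext t; rw [hcj]; simp
            simp [hf, this])
        _ = 0 := h0
    have hunitA : IsUnit A := by
      apply IsUnit.of_mul_eq_one (A ^ (m - 1))
      rw [← pow_succ', Nat.sub_add_cancel hm, hA1]
    have hall := vander_aux w (fun k => A ^ ((e k : Fin m) : ℕ))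
      (fun k => fun t => algebraMap F E (c (e k) t))
      (fun k k' => ((Commute.refl A).pow_pow _ _).eq)
      (fun k => hunitA.pow _)
      (fun k k' hkk' => hA3 _ _ (Fin.isLt _) (Fin.isLt _)
        (fun h => hkk' (e.injective (Subtype.ext (Fin.val_injective h)))))
      (by
        intro i h1 h2
        have hpow : ∀ k : Fin w, (A ^ ((e k : Fin m) : ℕ)) ^ i
            = A ^ (i * ((e k : Fin m) : ℕ)) := fun k => by
          rw [← pow_mul, Nat.mul_comm]
        simp_rw [hpow]
        exact hres i h1 (le_trans h2 hwδ))
    obtain ⟨j, hj⟩ : ∃ j, c j ≠ 0 := Function.ne_iff.mp hc0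
    have hk := hall (e.symm ⟨j, hj⟩)
    simp only [Equiv.apply_symm_apply] at hk
    apply hj
    funext t
    have := congrFun hk t
    exact (algebraMap F E).injective (by simpa using this)
end

section
/- With A a primitive m-th root of unity in M_ℓ(F_{q^s}), let e ∈ (F_q^ℓ)^m with block support W and locator polynomial Λ(X) = Π_{i∈W}(1 − A^i X). Then for each 0 ≤ i ≤ m−1: e_i ≠ 0 if and only if Λ(A^{−i}) = 0 (the zero matrix). -/
/-- The block support of an error vector. -/
def errSupp {F : Type*} [Zero F] [DecidableEq F] {m ℓ : ℕ} (e : Fin m → Fin ℓ → F) :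
    Finset (Fin m) :=
  Finset.univ.filter (fun i => e i ≠ 0)

/-- The error vector viewed over the extension field `E`. -/
def eHat {F E : Type*} [Field F] [Field E] [Algebra F E] {m ℓ : ℕ}
    (e : Fin m → Fin ℓ → F) : Fin m → Fin ℓ → E :=
  fun j t => algebraMap F E (e j t)

/-- The locator polynomial `Λ(X) = ∏_{i ∈ W} (1 - A^i X)`. -/
noncomputable def locator {E : Type*} [Field E] {m ℓ : ℕ} (A : Matrix (Fin ℓ) (Fin ℓ) E)
    (W : Finset (Fin m)) : Polynomial (Matrix (Fin ℓ) (Fin ℓ) E) :=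
  ((W.sort (· ≤ ·)).map fun i =>
    1 - Polynomial.C (A ^ i.val) * Polynomial.X).prod

/-- The factor `∏_{j ∈ W, j ≠ i} A^i (1 - A^j X)` of the evaluator polynomial. -/
noncomputable def evalFactor {E : Type*} [Field E] {m ℓ : ℕ} (A : Matrix (Fin ℓ) (Fin ℓ) E)
    (W : Finset (Fin m)) (i : Fin m) : Polynomial (Matrix (Fin ℓ) (Fin ℓ) E) :=
  (((W.erase i).sort (· ≤ ·)).map fun j =>
    Polynomial.C (A ^ i.val) * (1 - Polynomial.C (A ^ j.val) * Polynomial.X)).prod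

/-- The `k`-th vector coefficient of the evaluator polynomial
`L(X) = ∑_{i ∈ W} (∏_{j ∈ W, j ≠ i} A^i (1 - A^j X)) ⋄ e_i`. -/
noncomputable def evaluatorCoeff {F E : Type*} [Field F] [Field E] [Algebra F E] [DecidableEq F]
    {m ℓ : ℕ} (A : Matrix (Fin ℓ) (Fin ℓ) E) (e : Fin m → Fin ℓ → F) (k : ℕ) :
    Fin ℓ → E :=
  ∑ i ∈ errSupp e, ((evalFactor A (errSupp e) i).coeff k).mulVec (eHat e i)

/-- The `j`-th coefficient `S_{A^{j+1}}(e)` of the syndrome series `S_∞(X)`. -/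
def syndromeCoeff {F E : Type*} [Field F] [Field E] [Algebra F E]
    {m ℓ : ℕ} (A : Matrix (Fin ℓ) (Fin ℓ) E) (e : Fin m → Fin ℓ → F) (j : ℕ) :
    Fin ℓ → E :=
  ∑ i : Fin m, (A ^ (i.val * (j + 1))).mulVec (eHat e i)


section Aux

variable {E : Type*} [Field E] {m ℓ : ℕ}

private lemma evalMulNoncomm {R : Type*} [Semiring R] (p q : Polynomial R) (x : R)
    (h : ∀ k, Commute (q.coeff k) x) :
    (p * q).eval x = p.eval x * q.eval x :=
  Polynomial.eval₂_mul_noncomm _ _ h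

private lemma coeff_factor_commute (A B : Matrix (Fin ℓ) (Fin ℓ) E)
    (hB : ∀ n : ℕ, Commute (A ^ n) B) (a : Fin m) (k : ℕ) :
    Commute ((1 - Polynomial.C (A ^ a.val) * Polynomial.X).coeff k) B := by
  rw [Polynomial.coeff_sub, Polynomial.coeff_C_mul]
  apply Commute.sub_left
  · rw [Polynomial.coeff_one]; split <;> simp [Commute.one_left, Commute.zero_left]
  · rcases eq_or_ne k 1 with rfl | hk
    · simpa using (hB a.val)
    · simp [Polynomial.coeff_X_of_ne_one hk, Commute.zero_left]

private lemma coeff_prod_commute (A B : Matrix (Fin ℓ) (Fin ℓ) E)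
    (hB : ∀ n : ℕ, Commute (A ^ n) B) (l : List (Fin m)) (k : ℕ) :
    Commute (((l.map fun i : Fin m => 1 - Polynomial.C (A ^ i.val) * Polynomial.X).prod).coeff k) B := by
  induction l generalizing k with
  | nil =>
    simp only [List.map_nil, List.prod_nil, Polynomial.coeff_one]
    split <;> simp [Commute.one_left, Commute.zero_left]
  | cons a l ih =>
    rw [List.map_cons, List.prod_cons, Polynomial.coeff_mul]
    exact Commute.sum_left _ _ _ fun p _ =>
      (coeff_factor_commute A B hB a p.1).mul_left (ih p.2)

private lemma eval_locator_list (A B : Matrix (Fin ℓ) (Fin ℓ) E)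
    (hB : ∀ n : ℕ, Commute (A ^ n) B) (l : List (Fin m)) :
    Polynomial.eval B ((l.map fun i : Fin m => 1 - Polynomial.C (A ^ i.val) * Polynomial.X).prod)
      = (l.map fun i : Fin m => 1 - A ^ i.val * B).prod := by
  induction l with
  | nil => simp
  | cons a l ih =>
    rw [List.map_cons, List.prod_cons, List.map_cons, List.prod_cons,
      evalMulNoncomm _ _ _ (coeff_prod_commute A B hB l), ih]
    congr 1
    rw [Polynomial.eval_sub, Polynomial.eval_one, Polynomial.eval_C_mul, Polynomial.eval_X]

end Aux

/-- Roots of the locator polynomial locate the errors: `e_i ≠ 0` if and only if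
`Λ(A^{-i}) = 0`, where `A^{-i} = A^{m-i}`. -/
theorem locator_roots_iff_error
    (F E : Type*) [Field F] [Fintype F] [DecidableEq F] [Field E] [Algebra F E]
    (m ℓ : ℕ) (hm : 0 < m) (hℓ : 0 < ℓ)
    (A : Matrix (Fin ℓ) (Fin ℓ) E)
    (hA1 : A ^ m = 1)
    (hA2 : ∀ i : ℕ, 0 < i → i < m → A ^ i ≠ 1)
    (hA3 : ∀ i j : ℕ, i < m → j < m → i ≠ j → IsUnit (A ^ i - A ^ j))
    (e : Fin m → Fin ℓ → F) :
    ∀ i : Fin m, e i ≠ 0 ↔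
      Polynomial.eval (A ^ (m - i.val)) (locator A (errSupp e)) = 0 := by
  haveI : Nonempty (Fin ℓ) := ⟨⟨0, hℓ⟩⟩
  have hpow : ∀ k : ℕ, A ^ k = A ^ (k % m) := by
    intro k
    conv_lhs => rw [← Nat.div_add_mod k m, pow_add, pow_mul, hA1, one_pow, one_mul]
  intro i
  have heval : Polynomial.eval (A ^ (m - i.val)) (locator A (errSupp e))
      = (((errSupp e).sort (· ≤ ·)).map fun j => 1 - A ^ j.val * A ^ (m - i.val)).prod := by
    exact eval_locator_list A (A ^ (m - i.val)) (fun n => Commute.pow_pow_self A n _) _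
  rw [heval]
  constructor
  · intro hei
    have hiW : i ∈ errSupp e := by simp [errSupp, hei]
    apply List.prod_eq_zero
    have : (0 : Matrix (Fin ℓ) (Fin ℓ) E) = 1 - A ^ i.val * A ^ (m - i.val) := by
      rw [← pow_add, Nat.add_sub_cancel' (le_of_lt i.isLt), hA1, sub_self]
    rw [this]
    exact List.mem_map_of_mem ((Finset.mem_sort _).mpr hiW)
  · intro h0 hei0
    have hiW : i ∉ errSupp e := by simp [errSupp, hei0]
    have : IsUnit (((errSupp e).sort (· ≤ ·)).map
        fun j => 1 - A ^ j.val * A ^ (m - i.val)).prod := by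
      apply List.prod_isUnit
      intro x hx
      obtain ⟨j, hj, rfl⟩ := List.mem_map.mp hx
      have hjW : j ∈ errSupp e := (Finset.mem_sort _).mp hj
      have hji : j ≠ i := fun h => hiW (h ▸ hjW)
      set k := j.val + (m - i.val) with hk
      have hkm : k ≠ m := by
        intro h
        apply hji
        have : j.val = i.val := by omega
        exact Fin.ext this
      have hkpos : 0 < k := by omega
      have hklt : k < 2 * m := by omega
      have hmod : k % m ≠ 0 := by
        intro h
        obtain ⟨c, hc⟩ := Nat.dvd_of_mod_eq_zero h
        have hc2 : c < 2 := by nlinarith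
        interval_cases c <;> omega
      have := hA3 0 (k % m) hm (Nat.mod_lt _ hm) (Ne.symm hmod)
      rw [pow_zero] at this
      rw [← pow_add, ← hk, hpow k]
      exact this
    rw [h0] at this
    exact (not_isUnit_zero : ¬ IsUnit (0 : Matrix (Fin ℓ) (Fin ℓ) E)) this
end

section
/- With A a primitive m-th root of unity in M_ℓ(F_{q^s}), let e ∈ (F_q^ℓ)^m have block support W, and let L(X) = Σ_{i∈W}(Π_{j∈W, j≠i} A^i(1 − A^j X)) ⋄ e_i be the evaluator polynomial. Then for every i ∈ W, e_i = (Π_{j∈W\{i}} (A^i − A^j)^{−1}) · L(A^{−i}), where L(A^{−i}) = Σ_k (A^{−i})^k L_k with L_k the vector coefficients of L. -/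
section Aux

variable {ℓ : ℕ} {E : Type*} [Field E]

lemma matCommuteInv {X Y : Matrix (Fin ℓ) (Fin ℓ) E} (h : Commute X Y) (hu : IsUnit X) :
    Commute X⁻¹ Y := by
  obtain ⟨u, rfl⟩ := hu
  rw [← Matrix.coe_units_inv]
  exact h.units_inv_left

lemma invProdMulProd (l : List (Matrix (Fin ℓ) (Fin ℓ) E))
    (hu : ∀ x ∈ l, IsUnit x) (hc : ∀ x ∈ l, ∀ y ∈ l, Commute x y) :
    (l.map fun x => x⁻¹).prod * l.prod = 1 := by
  induction l with
  | nil => simp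
  | cons x t ih =>
      have hux := hu x (by simp)
      have hIt : Commute ((t.map fun x => x⁻¹).prod) x := by
        apply Commute.list_prod_left
        intro y hy
        simp only [List.mem_map] at hy
        obtain ⟨z, hz, rfl⟩ := hy
        exact matCommuteInv (hc z (by simp [hz]) x (by simp)) (hu z (by simp [hz]))
      have h1 : x⁻¹ * x = 1 := Matrix.nonsing_inv_mul _ (Matrix.isUnit_iff_isUnit_det x |>.mp hux)
      calc (((x :: t).map fun x => x⁻¹).prod) * ((x :: t)).prod
          = x⁻¹ * ((t.map fun x => x⁻¹).prod * x) * t.prod := by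
            simp [List.prod_cons, mul_assoc]
        _ = x⁻¹ * (x * (t.map fun x => x⁻¹).prod) * t.prod := by rw [hIt]
        _ = (x⁻¹ * x) * ((t.map fun x => x⁻¹).prod * t.prod) := by simp [mul_assoc]
        _ = 1 := by
            rw [h1, ih (fun y hy => hu y (by simp [hy]))
              (fun a ha b hb => hc a (by simp [ha]) b (by simp [hb])), one_mul]

lemma mulVecSum {ι : Type*} (M : Matrix (Fin ℓ) (Fin ℓ) E) (s : Finset ι) (f : ι → Fin ℓ → E) :
    M.mulVec (∑ i ∈ s, f i) = ∑ i ∈ s, M.mulVec (f i) := by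
  classical
  induction s using Finset.induction with
  | empty => simp [Matrix.mulVec_zero]
  | insert _ _ h ih => simp [Finset.sum_insert h, Matrix.mulVec_add, ih]

lemma sumMulVec {ι : Type*} (s : Finset ι) (M : ι → Matrix (Fin ℓ) (Fin ℓ) E) (v : Fin ℓ → E) :
    (∑ i ∈ s, M i).mulVec v = ∑ i ∈ s, (M i).mulVec v := by
  classical
  induction s using Finset.induction with
  | empty => simp [Matrix.zero_mulVec]
  | insert _ _ h ih => simp [Finset.sum_insert h, Matrix.add_mulVec, ih]

variable {m : ℕ} (A : Matrix (Fin ℓ) (Fin ℓ) E)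

/-- abstract pre-evalFactor over `Polynomial E`. -/
noncomputable def preFactor (a : ℕ) (l : List (Fin m)) : Polynomial (Polynomial E) :=
  (l.map fun j => Polynomial.C ((Polynomial.X : Polynomial E) ^ a) *
    (1 - Polynomial.C ((Polynomial.X : Polynomial E) ^ j.val) * Polynomial.X)).prod

lemma preFactor_map (a : ℕ) (l : List (Fin m)) :
    (preFactor (E := E) a l).map (Polynomial.aeval A).toRingHom =
      (l.map fun j => Polynomial.C (A ^ a) *
        (1 - Polynomial.C (A ^ j.val) * Polynomial.X)).prod := by
  rw [preFactor, Polynomial.map_list_prod, List.map_map]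
  congr 1
  ext j
  simp [Polynomial.map_mul, Polynomial.map_sub, Polynomial.map_one, Function.comp]

lemma preFactor_natDegree_le (a : ℕ) (l : List (Fin m)) :
    (preFactor (E := E) a l).natDegree ≤ l.length := by
  refine (Polynomial.natDegree_list_prod_le _).trans ?_
  rw [List.map_map]
  calc ((l.map _).sum) ≤ (l.map _).length • 1 := by
        apply List.sum_le_card_nsmul
        intro x hx
        simp only [List.mem_map] at hx
        obtain ⟨j, hj, rfl⟩ := hx
        refine (Polynomial.natDegree_C_mul_le _ _).trans ?_
        refine (Polynomial.natDegree_sub_le _ _).trans ?_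
        simp [Polynomial.natDegree_C_mul_le]
    _ = l.length := by simp

lemma preFactor_eval_image (a b : ℕ) (l : List (Fin m)) :
    (Polynomial.aeval A) ((preFactor (E := E) a l).eval ((Polynomial.X : Polynomial E) ^ b)) =
      (l.map fun j => A ^ a * (1 - A ^ j.val * A ^ b)).prod := by
  rw [preFactor, Polynomial.eval_list_prod, List.map_map, map_list_prod, List.map_map]
  congr 1
  ext j
  simp [Function.comp, mul_sub]

end Aux


/-- Error evaluation: for `i` in the support `W` of the error,
`e_i = (∏_{j ∈ W, j ≠ i} (A^i - A^j)^{-1}) · L(A^{-i})`, where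
`L(A^{-i}) = ∑_k (A^{-i})^k L_k` and `A^{-i} = A^{m-i}`. -/
theorem error_evaluation
    (F E : Type*) [Field F] [Fintype F] [DecidableEq F] [Field E] [Algebra F E]
    (m ℓ : ℕ) (hm : 0 < m) (hℓ : 0 < ℓ)
    (A : Matrix (Fin ℓ) (Fin ℓ) E)
    (hA1 : A ^ m = 1)
    (hA2 : ∀ i : ℕ, 0 < i → i < m → A ^ i ≠ 1)
    (hA3 : ∀ i j : ℕ, i < m → j < m → i ≠ j → IsUnit (A ^ i - A ^ j))
    (e : Fin m → Fin ℓ → F) :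
    ∀ i ∈ errSupp e,
      eHat e i =
        ((((errSupp e).erase i).sort (· ≤ ·)).map fun j =>
            (A ^ i.val - A ^ j.val)⁻¹).prod.mulVec
          (∑ k ∈ Finset.range (errSupp e).card,
            ((A ^ (m - i.val)) ^ k).mulVec (evaluatorCoeff A e k)) := by
  
  intro i hi
  set W := errSupp e with hW
  set n := W.card with hn
  have hnpos : 0 < n := Finset.card_pos.mpr ⟨i, hi⟩
  set a := i.val with ha
  have ham : a < m := i.isLt
  set b : Polynomial E := (Polynomial.X : Polynomial E) ^ (m - a) with hb
  set f := (Polynomial.aeval A : Polynomial E →ₐ[E] Matrix (Fin ℓ) (Fin ℓ) E).toRingHom with hf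
  -- Step 1: the inner sum over k equals the evaluation of the preFactor polynomials
  have hkey : ∀ i' ∈ W,
      (∑ k ∈ Finset.range n, (A ^ (m - a)) ^ k * (evalFactor A W i').coeff k) =
        f ((preFactor i'.val ((W.erase i').sort (· ≤ ·))).eval b) := by
    intro i' hi'
    have hdeg : (preFactor (E := E) i'.val ((W.erase i').sort (· ≤ ·))).natDegree < n := by
      refine lt_of_le_of_lt (preFactor_natDegree_le _ _) ?_
      rw [Finset.length_sort, Finset.card_erase_of_mem hi']
      exact Nat.sub_lt hnpos one_pos
    have hmap : evalFactor A W i' =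
        (preFactor (E := E) i'.val ((W.erase i').sort (· ≤ ·))).map f := by
      rw [preFactor_map]; rfl
    rw [Polynomial.eval_eq_sum_range' hdeg, map_sum]
    refine Finset.sum_congr rfl fun k _ => ?_
    rw [hmap, Polynomial.coeff_map]
    have hfb : (A ^ (m - a)) ^ k = f (b ^ k) := by simp [hb, hf]
    rw [hfb, ← map_mul]
    exact congrArg f (mul_comm _ _)
  -- Step 2: rewrite the RHS sum
  have hsum : (∑ k ∈ Finset.range n, ((A ^ (m - a)) ^ k).mulVec (evaluatorCoeff A e k)) =
      ∑ i' ∈ W, (f ((preFactor i'.val ((W.erase i').sort (· ≤ ·))).eval b)).mulVec (eHat e i') := by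
    unfold evaluatorCoeff
    rw [← hW]
    calc (∑ k ∈ Finset.range n, ((A ^ (m - a)) ^ k).mulVec
            (∑ i' ∈ W, ((evalFactor A W i').coeff k).mulVec (eHat e i')))
        = ∑ k ∈ Finset.range n, ∑ i' ∈ W,
            ((A ^ (m - a)) ^ k * (evalFactor A W i').coeff k).mulVec (eHat e i') := by
          refine Finset.sum_congr rfl fun k _ => ?_
          rw [mulVecSum]
          exact Finset.sum_congr rfl fun i' _ => by rw [Matrix.mulVec_mulVec]
      _ = ∑ i' ∈ W, (∑ k ∈ Finset.range n,
            (A ^ (m - a)) ^ k * (evalFactor A W i').coeff k).mulVec (eHat e i') := by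
          rw [Finset.sum_comm]
          exact Finset.sum_congr rfl fun i' _ => (sumMulVec _ _ _).symm
      _ = _ := Finset.sum_congr rfl fun i' hi' => by rw [hkey i' hi']
  -- Step 3: all terms with i' ≠ i vanish
  have hzero : ∀ i' ∈ W, i' ≠ i →
      f ((preFactor i'.val ((W.erase i').sort (· ≤ ·))).eval b) = 0 := by
    intro i' _ hne
    rw [show ((preFactor i'.val ((W.erase i').sort (· ≤ ·))).eval b) =
      ((preFactor i'.val ((W.erase i').sort (· ≤ ·))).eval
        ((Polynomial.X : Polynomial E) ^ (m - a))) from rfl]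
    rw [show f ((preFactor i'.val ((W.erase i').sort (· ≤ ·))).eval
        ((Polynomial.X : Polynomial E) ^ (m - a))) =
      (((W.erase i').sort (· ≤ ·)).map fun j =>
        A ^ i'.val * (1 - A ^ j.val * A ^ (m - a))).prod from preFactor_eval_image A _ _ _]
    apply List.prod_eq_zero
    have himem : i ∈ (W.erase i').sort (· ≤ ·) :=
      (Finset.mem_sort _).mpr (Finset.mem_erase.mpr ⟨Ne.symm hne, hi⟩)
    refine List.mem_map.mpr ⟨i, himem, ?_⟩
    have : A ^ a * A ^ (m - a) = 1 := by
      rw [← pow_add, Nat.add_sub_cancel' ham.le, hA1]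
    rw [← ha, this]
    simp
  -- Step 4: the i-term gives the product of (A^i - A^j)
  have hiterm : f ((preFactor i.val ((W.erase i).sort (· ≤ ·))).eval b) =
      (((W.erase i).sort (· ≤ ·)).map fun j => A ^ a - A ^ j.val).prod := by
    rw [show ((preFactor i.val ((W.erase i).sort (· ≤ ·))).eval b) =
      ((preFactor i.val ((W.erase i).sort (· ≤ ·))).eval
        ((Polynomial.X : Polynomial E) ^ (m - a))) from rfl]
    rw [show f ((preFactor i.val ((W.erase i).sort (· ≤ ·))).eval
        ((Polynomial.X : Polynomial E) ^ (m - a))) =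
      (((W.erase i).sort (· ≤ ·)).map fun j =>
        A ^ i.val * (1 - A ^ j.val * A ^ (m - a))).prod from preFactor_eval_image A _ _ _]
    congr 1
    apply List.map_congr_left
    intro j _
    have h1 : A ^ a * (A ^ j.val * A ^ (m - a)) = A ^ j.val := by
      rw [← pow_add, ← pow_add, show a + (j.val + (m - a)) = m + j.val by omega,
        pow_add, hA1, one_mul]
    rw [← ha, mul_sub, mul_one, h1]
  rw [hsum, Finset.sum_eq_single_of_mem i hi
    (fun i' hi' hne => by rw [hzero i' hi' hne, Matrix.zero_mulVec]), hiterm]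
  rw [Matrix.mulVec_mulVec]
  have hlist : (((W.erase i).sort (· ≤ ·)).map fun j => (A ^ a - A ^ j.val)⁻¹) =
      ((((W.erase i).sort (· ≤ ·)).map fun j => A ^ a - A ^ j.val).map fun x => x⁻¹) := by
    rw [List.map_map]; rfl
  rw [hlist, invProdMulProd, Matrix.one_mulVec]
  · intro x hx
    simp only [List.mem_map] at hx
    obtain ⟨j, hj, rfl⟩ := hx
    have hjW : j ∈ W.erase i := (Finset.mem_sort _).mp hj
    have hji : j ≠ i := (Finset.mem_erase.mp hjW).1
    exact hA3 a j.val ham j.isLt (fun h => hji (Fin.ext (by omega)))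
  · intro x hx y hy
    simp only [List.mem_map] at hx hy
    obtain ⟨j, _, rfl⟩ := hx
    obtain ⟨j', _, rfl⟩ := hy
    apply Commute.sub_left <;> apply Commute.sub_right <;>
      exact (Commute.refl A).pow_pow _ _
end

section
/- Let q be a prime power, m = q^ℓ − 1, A ∈ M_ℓ(F_q) a primitive m-th root of unity, k ≤ m, and π : F_q[A] → F_q^ℓ an F_q-linear map. Then the code C_{A,k,π} = {(π(P(A^0)), π(P(A^1)), ..., π(P(A^{m−1}))) : P ∈ F_q[A][X], deg P < k} is an ℓ-quasi-cyclic code over F_q of length mℓ and F_q-dimension at least kℓ − dim_{F_q}(ker π^{×m} restricted to the image of the evaluation map). -/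
set_option synthInstance.maxHeartbeats 1000000
set_option maxHeartbeats 2000000

private lemma isUnit_of_isUnit_map' {R S : Type*} [CommRing R] [Ring S] [Finite R]
    (f : R →+* S) (hf : Function.Injective f) (x : R) (h : IsUnit (f x)) : IsUnit x := by
  have hinj : Function.Injective (fun y : R => x * y) := by
    intro y z hyz
    apply hf
    have h2 : f (x * y) = f (x * z) := congrArg f hyz
    rw [map_mul, map_mul] at h2
    exact h.mul_left_cancel h2
  obtain ⟨y, hy⟩ := (Finite.injective_iff_surjective.mp hinj) 1
  exact IsUnit.of_mul_eq_one y hy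

private lemma vandermonde_ker' {R S : Type*} [CommRing R] [Ring S] [Finite R]
    (f : R →+* S) (hf : Function.Injective f) (k : ℕ) (a : R)
    (hunit : ∀ i j : ℕ, i < k → j < k → i ≠ j → IsUnit (f (a ^ j) - f (a ^ i)))
    (c : Fin k → R) (h : ∀ t : Fin k, ∑ i : Fin k, c i * (a ^ (t : ℕ)) ^ (i : ℕ) = 0) :
    c = 0 := by
  classical
  set B := Matrix.vandermonde (fun t : Fin k => a ^ (t : ℕ)) with hB
  have hdet : IsUnit B.det := by
    rw [hB, Matrix.det_vandermonde]
    refine Finset.prod_induction _ IsUnit (fun x y hx hy => hx.mul hy) isUnit_one ?_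
    intro i _
    refine Finset.prod_induction _ IsUnit (fun x y hx hy => hx.mul hy) isUnit_one ?_
    intro j hj
    rw [Finset.mem_Ioi] at hj
    refine isUnit_of_isUnit_map' f hf _ ?_
    rw [map_sub]
    exact hunit (i : ℕ) (j : ℕ) i.isLt j.isLt (Fin.val_ne_of_ne hj.ne)
  haveI := Matrix.invertibleOfIsUnitDet B hdet
  have hmul : B.mulVec c = 0 := by
    funext t
    have ht := h t
    simp only [Matrix.mulVec, Matrix.vandermonde, dotProduct, Pi.zero_apply, hB]
    rw [← ht]
    exact Finset.sum_congr rfl fun i _ => mul_comm _ _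
  have h2 := congrArg (fun v => (⅟B).mulVec v) hmul
  simpa [Matrix.mulVec_mulVec, invOf_mul_self, Matrix.one_mulVec] using h2

/-- The evaluation map sending a coefficient vector `c` over `F[A]` to the vector of
evaluations `(∑ i, c i * (A^t)^i)_{t < m}`. -/
noncomputable def evMap (F : Type*) [Field F] (ℓ k m : ℕ) (A : Matrix (Fin ℓ) (Fin ℓ) F) :
    (Fin k → Algebra.adjoin F {A}) →ₗ[F] (Fin m → Matrix (Fin ℓ) (Fin ℓ) F) where
  toFun c t := ∑ i : Fin k, (c i : Matrix (Fin ℓ) (Fin ℓ) F) * (A ^ (t : ℕ)) ^ (i : ℕ)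
  map_add' x y := by funext t; simp [add_mul, Finset.sum_add_distrib]
  map_smul' r x := by funext t; simp [Finset.smul_sum, smul_mul_assoc]

theorem evMap_apply (F : Type*) [Field F] (ℓ k m : ℕ) (A : Matrix (Fin ℓ) (Fin ℓ) F)
    (c : Fin k → Algebra.adjoin F {A}) (t : Fin m) :
    evMap F ℓ k m A c t
      = ∑ i : Fin k, (c i : Matrix (Fin ℓ) (Fin ℓ) F) * (A ^ (t : ℕ)) ^ (i : ℕ) := rfl

theorem mem_range_evMap_iff (F : Type*) [Field F] (ℓ m k : ℕ)
    (A : Matrix (Fin ℓ) (Fin ℓ) F) (v : Fin m → Matrix (Fin ℓ) (Fin ℓ) F) :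
    v ∈ LinearMap.range (evMap F ℓ k m A) ↔
      ∃ P : Polynomial (Matrix (Fin ℓ) (Fin ℓ) F),
        (∀ i, P.coeff i ∈ Algebra.adjoin F {A}) ∧ P.degree < (k : ℕ) ∧
        ∀ t : Fin m, v t = Polynomial.eval (A ^ t.val) P := by
  constructor
  · rintro ⟨c, rfl⟩
    refine ⟨∑ i : Fin k, Polynomial.monomial (i : ℕ) ((c i : Matrix (Fin ℓ) (Fin ℓ) F)),
      ?_, ?_, ?_⟩
    · intro n
      rw [Polynomial.finset_sum_coeff]
      refine Subalgebra.sum_mem _ fun i _ => ?_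
      rw [Polynomial.coeff_monomial]
      split_ifs
      · exact (c i).2
      · exact zero_mem _
    · refine lt_of_le_of_lt (Polynomial.degree_sum_le _ _) ?_
      rw [Finset.sup_lt_iff (by exact_mod_cast WithBot.bot_lt_coe k)]
      intro i _
      exact lt_of_le_of_lt (Polynomial.degree_monomial_le _ _) (by exact_mod_cast i.isLt)
    · intro t
      rw [evMap_apply, Polynomial.eval_finset_sum]
      exact Finset.sum_congr rfl fun i _ => by rw [Polynomial.eval_monomial]
  · rintro ⟨P, hcoeff, hdeg, hval⟩
    refine ⟨fun i => ⟨P.coeff i, hcoeff i⟩, ?_⟩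
    funext t
    rw [evMap_apply, hval t]
    rcases Nat.eq_zero_or_pos k with hk0 | hk0
    · subst hk0
      have hP : P = 0 := by
        rw [← Polynomial.degree_eq_bot]
        exact Nat.WithBot.lt_zero_iff.mp (by exact_mod_cast hdeg)
      simp [hP]
    · have hnd : P.natDegree < k := by
        by_cases hP : P = 0
        · simpa [hP] using hk0
        · exact (Polynomial.natDegree_lt_iff_degree_lt hP).mpr hdeg
      rw [Polynomial.eval_eq_sum_range' hnd, ← Fin.sum_univ_eq_sum_range]

theorem ker_evMap (F : Type*) [Field F] [Fintype F] (ℓ m k : ℕ) (hk : k ≤ m)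
    (A : Matrix (Fin ℓ) (Fin ℓ) F)
    (hA3 : ∀ i j : ℕ, i < m → j < m → i ≠ j → IsUnit (A ^ i - A ^ j)) :
    LinearMap.ker (evMap F ℓ k m A) = ⊥ := by
  rw [LinearMap.ker_eq_bot']
  intro c hc
  letI : CommRing ↥(Algebra.adjoin F {A}) := Algebra.adjoinCommRingOfComm F
    (by rintro x hx y hy
        simp only [Set.mem_singleton_iff] at hx hy
        rw [hx, hy])
  have key := vandermonde_ker' (S := Matrix (Fin ℓ) (Fin ℓ) F)
    ((Algebra.adjoin F {A}).val.toRingHom) Subtype.coe_injective k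
    ⟨A, Algebra.self_mem_adjoin_singleton F A⟩ ?_ c ?_
  · exact key
  · intro i j hi hj hne
    rw [map_pow, map_pow]
    exact hA3 j i (lt_of_lt_of_le hj hk) (lt_of_lt_of_le hi hk) (Ne.symm hne)
  · intro t
    have h0 : evMap F ℓ k m A c (Fin.castLE hk t) = 0 := by rw [hc]; rfl
    rw [evMap_apply] at h0
    apply Subtype.coe_injective
    push_cast
    simpa using h0

/-- The quasi-cyclic evaluation code `C_{A,k,π}`: with `m = q^ℓ - 1`, `A` a
primitive `m`-th root of unity in `M_ℓ(F_q)`, `k ≤ m` and `π : F_q[A] → F_q^ℓ`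
an `F_q`-linear map, the code obtained by evaluating polynomials over `F_q[A]`
of degree `< k` at `A^0, …, A^{m-1}` and applying `π` componentwise is an
`ℓ`-quasi-cyclic code of length `mℓ` and `F_q`-dimension at least
`kℓ - dim ker(π^{×m}∣_{im ev_A})`. -/
theorem quasiCyclic_evaluation_code
    (F : Type*) [Field F] [Fintype F] (ℓ m k : ℕ) (hℓ : 0 < ℓ)
    (hm : m + 1 = Fintype.card F ^ ℓ) (hk : k ≤ m)
    (A : Matrix (Fin ℓ) (Fin ℓ) F)
    (hA1 : A ^ m = 1)
    (hA2 : ∀ i : ℕ, 0 < i → i < m → A ^ i ≠ 1)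
    (hA3 : ∀ i j : ℕ, i < m → j < m → i ≠ j → IsUnit (A ^ i - A ^ j))
    (π : Matrix (Fin ℓ) (Fin ℓ) F →ₗ[F] (Fin ℓ → F)) :
    ∃ C : Submodule F (Fin m → Fin ℓ → F),
      (∀ c, c ∈ C ↔ ∃ P : Polynomial (Matrix (Fin ℓ) (Fin ℓ) F),
        (∀ i, P.coeff i ∈ Algebra.adjoin F {A}) ∧ P.degree < (k : ℕ) ∧
        ∀ t : Fin m, c t = π (Polynomial.eval (A ^ t.val) P)) ∧
      (∀ c ∈ C, (fun t : Fin m => c ⟨(t.val + 1) % m, Nat.mod_lt _ t.pos⟩) ∈ C) ∧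
      ∃ V : Submodule F (Fin m → Matrix (Fin ℓ) (Fin ℓ) F),
        (∀ v, v ∈ V ↔ ∃ P : Polynomial (Matrix (Fin ℓ) (Fin ℓ) F),
          (∀ i, P.coeff i ∈ Algebra.adjoin F {A}) ∧ P.degree < (k : ℕ) ∧
          ∀ t : Fin m, v t = Polynomial.eval (A ^ t.val) P) ∧
        k * ℓ - Module.finrank F
            (LinearMap.ker
              ((LinearMap.pi fun t : Fin m =>
                π ∘ₗ LinearMap.proj t).domRestrict V)) ≤
          Module.finrank F C := by
  classical
  have hm1 : 1 ≤ m := by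
    have h2 : 1 < Fintype.card F ^ ℓ := Nat.one_lt_pow (by omega) Fintype.one_lt_card
    omega
  refine ⟨LinearMap.range ((LinearMap.pi fun t : Fin m =>
      π ∘ₗ LinearMap.proj t).domRestrict (LinearMap.range (evMap F ℓ k m A))), ?_, ?_, 
      LinearMap.range (evMap F ℓ k m A),
      fun v => mem_range_evMap_iff F ℓ m k A v, ?_⟩
  · -- membership characterization of C
    intro c
    constructor
    · rintro ⟨⟨v, hv⟩, rfl⟩
      obtain ⟨P, h1, h2, h3⟩ := (mem_range_evMap_iff F ℓ m k A v).mp hv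
      refine ⟨P, h1, h2, fun t => ?_⟩
      simp only [LinearMap.domRestrict_apply, LinearMap.pi_apply, LinearMap.comp_apply,
        LinearMap.proj_apply]
      rw [h3 t]
    · rintro ⟨P, h1, h2, h3⟩
      refine ⟨⟨fun t => Polynomial.eval (A ^ t.val) P,
        (mem_range_evMap_iff F ℓ m k A _).mpr ⟨P, h1, h2, fun t => rfl⟩⟩, ?_⟩
      funext t
      simp only [LinearMap.domRestrict_apply, LinearMap.pi_apply, LinearMap.comp_apply,
        LinearMap.proj_apply]
      exact (h3 t).symm
  · -- shift invariance
    intro c hc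
    rw [LinearMap.mem_range] at hc
    obtain ⟨⟨v, hv⟩, rfl⟩ := hc
    rw [LinearMap.mem_range] at hv
    obtain ⟨d, rfl⟩ := hv
    set d' : Fin k → Algebra.adjoin F {A} := fun i =>
      ⟨(d i : Matrix (Fin ℓ) (Fin ℓ) F) * A ^ (i : ℕ),
        mul_mem (d i).2 (pow_mem (Algebra.self_mem_adjoin_singleton F A) _)⟩ with hd'
    have hshift : ∀ t : Fin m, evMap F ℓ k m A d' t
        = evMap F ℓ k m A d ⟨(t.val + 1) % m, Nat.mod_lt _ t.pos⟩ := by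
      intro t
      rw [evMap_apply, evMap_apply]
      refine Finset.sum_congr rfl fun i _ => ?_
      have hp : A ^ ((t.val + 1) % m) = A ^ (t.val + 1) := by
        conv_rhs => rw [← Nat.mod_add_div (t.val + 1) m]
        rw [pow_add, pow_mul, hA1, one_pow, mul_one]
      show (d i : Matrix (Fin ℓ) (Fin ℓ) F) * A ^ (i : ℕ) * (A ^ (t : ℕ)) ^ (i : ℕ) = _
      simp only [hp]
      rw [mul_assoc, ← pow_mul, ← pow_mul, ← pow_add,
        show (i : ℕ) + (t : ℕ) * (i : ℕ) = ((t : ℕ) + 1) * (i : ℕ) by ring]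
    refine ⟨⟨evMap F ℓ k m A d', LinearMap.mem_range_self _ _⟩, ?_⟩
    funext t
    simp only [LinearMap.domRestrict_apply, LinearMap.pi_apply, LinearMap.comp_apply,
      LinearMap.proj_apply]
    rw [hshift t]
  · -- dimension bound
    haveI : Nontrivial (Matrix (Fin ℓ) (Fin ℓ) F) := by
      refine ⟨0, 1, fun h => ?_⟩
      have h2 := congrFun (congrFun h ⟨0, hℓ⟩) ⟨0, hℓ⟩
      simp [Matrix.one_apply] at h2
    have hAu : IsUnit A := by
      have h1 : A * A ^ (m - 1) = 1 := by
        calc A * A ^ (m - 1) = A ^ (1 + (m - 1)) := by rw [pow_add, pow_one]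
          _ = A ^ m := by rw [Nat.add_sub_cancel' hm1]
          _ = 1 := hA1
      have h2 : A ^ (m - 1) * A = 1 := by
        calc A ^ (m - 1) * A = A ^ ((m - 1) + 1) := by rw [pow_succ]
          _ = A ^ m := by rw [Nat.sub_add_cancel hm1]
          _ = 1 := hA1
      exact ⟨⟨A, A ^ (m - 1), h1, h2⟩, rfl⟩
    have e0 := LinearMap.finrank_range_add_finrank_ker
      ((LinearMap.pi fun t : Fin m => π ∘ₗ LinearMap.proj t).domRestrict
        (LinearMap.range (evMap F ℓ k m A)))
    have e1 := LinearMap.finrank_range_add_finrank_ker (evMap F ℓ k m A)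
    rw [ker_evMap F ℓ m k hk A hA3, finrank_bot, add_zero] at e1
    have e2 : Module.finrank F (Fin k → ↥(Algebra.adjoin F {A}))
        = k * Module.finrank F ↥(Algebra.adjoin F {A}) := by
      rw [Module.finrank_pi_fintype]
      simp [Finset.sum_const, mul_comm]
    have e3 : ℓ ≤ Module.finrank F ↥(Algebra.adjoin F {A}) := by
      haveI : Fintype ↥(Algebra.adjoin F {A}) := Fintype.ofFinite _
      have hcard : Fintype.card ↥(Algebra.adjoin F {A})
          = Fintype.card F ^ Module.finrank F ↥(Algebra.adjoin F {A}) := by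
        rw [Module.card_fintype (Module.finBasis F _), Fintype.card_fin]
      have hinj : Function.Injective (fun i : Fin (m + 1) =>
          if h : (i : ℕ) < m then
            (⟨A ^ (i : ℕ), pow_mem (Algebra.self_mem_adjoin_singleton F A) _⟩ :
              ↥(Algebra.adjoin F {A}))
          else 0) := by
        intro i j hij
        by_cases hi : (i : ℕ) < m <;> by_cases hj : (j : ℕ) < m <;>
          simp only [hi, hj, dif_pos, dif_neg, not_false_iff] at hij
        · by_contra hne
          have hne' : (i : ℕ) ≠ (j : ℕ) := Fin.val_ne_of_ne hne
          have h4 : A ^ (i : ℕ) - A ^ (j : ℕ) = 0 := by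
            have := congrArg Subtype.val hij
            simp only at this
            rw [this, sub_self]
          have := hA3 (i : ℕ) (j : ℕ) hi hj hne'
          rw [h4] at this
          exact one_ne_zero ((isUnit_zero_iff.mp this).symm)
        · exfalso
          have := congrArg Subtype.val hij
          simp only [ZeroMemClass.coe_zero] at this
          exact (hAu.pow (i : ℕ)).ne_zero this
        · exfalso
          have := congrArg Subtype.val hij
          simp only [ZeroMemClass.coe_zero] at this
          exact (hAu.pow (j : ℕ)).ne_zero this.symm
        · have hi' : (i : ℕ) = m := by omega
          have hj' : (j : ℕ) = m := by omega
          exact Fin.ext (hi'.trans hj'.symm)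
      have hle : m + 1 ≤ Fintype.card ↥(Algebra.adjoin F {A}) := by
        calc m + 1 = Fintype.card (Fin (m + 1)) := (Fintype.card_fin _).symm
        _ ≤ _ := Fintype.card_le_of_injective _ hinj
      rw [hcard, hm] at hle
      exact (Nat.pow_le_pow_iff_right Fintype.one_lt_card).mp hle
    have e4 : k * ℓ ≤ k * Module.finrank F ↥(Algebra.adjoin F {A}) :=
      Nat.mul_le_mul_left k e3
    omega
end

section
/- Let q be a prime power, m = q^ℓ − 1, A ∈ M_ℓ(F_q) a primitive m-th root of unity, k ≤ m, and let π : F_q[A] → F_q^ℓ send a matrix B = (b_{ij}) to its i-th row (b_{i1},...,b_{iℓ}) for some fixed i (or to its j-th column for some fixed j). Then π is an F_q-linear bijection, and the code C_{A,k,π} has dimension exactly kℓ over F_q and minimum Hamming distance at least m − k + 1. -/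
open Polynomial Module

namespace RowProjAux

variable {F : Type*} [Field F] [Fintype F] {ℓ m : ℕ}

lemma pow_mem_span (A : Matrix (Fin ℓ) (Fin ℓ) F) (n : ℕ) :
    A ^ n ∈ Submodule.span F (Set.range fun i : Fin ℓ => A ^ (i : ℕ)) := by
  induction n using Nat.strong_induction_on with
  | _ n ih =>
  rcases lt_or_ge n ℓ with h | h
  · exact Submodule.subset_span ⟨⟨n, h⟩, rfl⟩
  · have hmonic := Matrix.charpoly_monic A
    have hdeg : A.charpoly.natDegree = ℓ := by
      simpa using Matrix.charpoly_natDegree_eq_dim A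
    have hCH := Matrix.aeval_self_charpoly A
    rw [Polynomial.aeval_eq_sum_range, hdeg, Finset.sum_range_succ] at hCH
    have hlead : A.charpoly.coeff ℓ = 1 := by
      have := hmonic.coeff_natDegree
      rwa [hdeg] at this
    rw [hlead, one_smul] at hCH
    have hAl : A ^ ℓ = ∑ i ∈ Finset.range ℓ, (-(A.charpoly.coeff i)) • A ^ i := by
      have := eq_neg_of_add_eq_zero_right hCH
      rw [this, ← Finset.sum_neg_distrib]
      exact Finset.sum_congr rfl fun i _ => (neg_smul _ _).symm
    have hsplit : A ^ n = ∑ i ∈ Finset.range ℓ, (-(A.charpoly.coeff i)) • A ^ (n - ℓ + i) := by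
      have h1 : A ^ n = A ^ (n - ℓ) * A ^ ℓ := by rw [← pow_add]; congr 1; omega
      rw [h1, hAl, Finset.mul_sum]
      exact Finset.sum_congr rfl fun i _ => by rw [mul_smul_comm, ← pow_add]
    rw [hsplit]
    exact Submodule.sum_mem _ fun i hi =>
      Submodule.smul_mem _ _ (ih _ (by have := Finset.mem_range.mp hi; omega))

lemma isUnit_A (hm1 : 1 ≤ m) (A : Matrix (Fin ℓ) (Fin ℓ) F) (hA1 : A ^ m = 1) : IsUnit A := by
  refine ⟨⟨A, A ^ (m - 1), ?_, ?_⟩, rfl⟩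
  · rw [← pow_succ']
    have : m - 1 + 1 = m := by omega
    rw [this, hA1]
  · rw [← pow_succ]
    have : m - 1 + 1 = m := by omega
    rw [this, hA1]

lemma structure_lemma (hℓ : 0 < ℓ) (hm : m + 1 = Fintype.card F ^ ℓ)
    (A : Matrix (Fin ℓ) (Fin ℓ) F) (hA1 : A ^ m = 1)
    (hA3 : ∀ i j : ℕ, i < m → j < m → i ≠ j → IsUnit (A ^ i - A ^ j)) :
    (∀ B : Algebra.adjoin F {A}, B ≠ 0 →
      ∃ t : Fin m, (B : Matrix (Fin ℓ) (Fin ℓ) F) = A ^ (t : ℕ)) ∧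
    Nat.card (Algebra.adjoin F {A}) = m + 1 ∧
    Module.finrank F (Algebra.adjoin F {A}) = ℓ := by
  classical
  haveI : Nonempty (Fin ℓ) := ⟨⟨0, hℓ⟩⟩
  have h2 : 2 ≤ Fintype.card F := Fintype.one_lt_card
  have hm1 : 1 ≤ m := by
    have : 2 ≤ Fintype.card F ^ ℓ := le_trans h2 (Nat.le_self_pow (by omega) _)
    omega
  have hAunit : IsUnit A := isUnit_A hm1 A hA1
  have hpow_ne : ∀ i j : ℕ, i < m → j < m → i ≠ j → A ^ i ≠ A ^ j := by
    intro i j hi hj hij heq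
    exact (hA3 i j hi hj hij).ne_zero (by rw [heq, sub_self])
  set S := Algebra.adjoin F {A} with hSdef
  have hAmem : A ∈ S := Algebra.subset_adjoin rfl
  let e : Option (Fin m) → S := fun o => o.elim 0 fun t => ⟨A ^ (t : ℕ), pow_mem hAmem _⟩
  have he : Function.Injective e := by
    rintro (_ | s) (_ | t) h
    · rfl
    · exfalso
      have : (0 : Matrix (Fin ℓ) (Fin ℓ) F) = A ^ (t : ℕ) := congrArg Subtype.val h
      exact (hAunit.pow (t : ℕ)).ne_zero this.symm
    · exfalso
      have : A ^ (s : ℕ) = (0 : Matrix (Fin ℓ) (Fin ℓ) F) := congrArg Subtype.val h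
      exact (hAunit.pow (s : ℕ)).ne_zero this
    · have hval : A ^ (s : ℕ) = A ^ (t : ℕ) := congrArg Subtype.val h
      have : s = t := by
        by_contra hne
        exact hpow_ne s t s.isLt t.isLt (fun hc => hne (Fin.val_injective hc)) hval
      rw [this]
  haveI : Finite S := Subtype.finite
  haveI : Fintype S := Fintype.ofFinite _
  haveI : Nonempty S := ⟨0⟩
  have hcard_le : m + 1 ≤ Fintype.card S := by
    have := Fintype.card_le_of_injective e he
    simpa using this
  have hrank_le : Module.finrank F S ≤ ℓ := by
    have hsub : Subalgebra.toSubmodule S ≤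
        Submodule.span F (Set.range fun i : Fin ℓ => A ^ (i : ℕ)) := by
      intro x hx
      rw [Subalgebra.mem_toSubmodule, hSdef, Algebra.adjoin_singleton_eq_range_aeval] at hx
      obtain ⟨p, rfl⟩ := hx
      show aeval A p ∈ _
      rw [Polynomial.aeval_eq_sum_range]
      exact Submodule.sum_mem _ fun i _ => Submodule.smul_mem _ _ (pow_mem_span A i)
    have h1 := Submodule.finrank_mono hsub
    have h2' : Module.finrank F
        (Submodule.span F (Set.range fun i : Fin ℓ => A ^ (i : ℕ))) ≤ ℓ := by
      have := finrank_range_le_card (R := F) (fun i : Fin ℓ => A ^ (i : ℕ))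
      simpa [Set.finrank] using this
    exact le_trans h1 h2'
  have hcard_eq : Fintype.card S = Fintype.card F ^ Module.finrank F S :=
    card_eq_pow_finrank
  have hrank : Module.finrank F S = ℓ := by
    by_contra hne
    have hlt : Module.finrank F S < ℓ := lt_of_le_of_ne hrank_le hne
    have : Fintype.card S < Fintype.card F ^ ℓ := by
      rw [hcard_eq]
      exact Nat.pow_lt_pow_right (by omega) hlt
    omega
  have hcardS : Fintype.card S = m + 1 := by rw [hcard_eq, hrank, ← hm]
  have hebij : Function.Bijective e := by
    rw [Fintype.bijective_iff_injective_and_card]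
    refine ⟨he, by simp [hcardS]⟩
  refine ⟨?_, ?_, hrank⟩
  · intro B hB
    obtain ⟨o, ho⟩ := hebij.2 B
    cases o with
    | none => exact absurd ho.symm hB
    | some t => exact ⟨t, by rw [← ho]; rfl⟩
  · rw [Nat.card_eq_fintype_card, hcardS]

lemma sum_monomial_coeff {R : Type*} [Semiring R] {k : ℕ} (w : Fin k → R) (i : Fin k) :
    (∑ j : Fin k, Polynomial.monomial (j : ℕ) (w j)).coeff (i : ℕ) = w i := by
  classical
  rw [Polynomial.finset_sum_coeff, Finset.sum_eq_single i]
  · simp [Polynomial.coeff_monomial]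
  · intro j _ hj
    rw [Polynomial.coeff_monomial, if_neg (fun hc => hj (Fin.val_injective hc))]
  · simp

lemma sum_monomial_degree {R : Type*} [Semiring R] {k : ℕ} (w : Fin k → R) :
    (∑ j : Fin k, Polynomial.monomial (j : ℕ) (w j)).degree < (k : ℕ) := by
  refine lt_of_le_of_lt (Polynomial.degree_sum_le _ _) ((Finset.sup_lt_iff ?_).mpr ?_)
  · exact bot_lt_iff_ne_bot.mpr (by simp)
  · intro i _
    exact lt_of_le_of_lt (Polynomial.degree_monomial_le _ _) (by exact_mod_cast i.isLt)

end RowProjAux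

open RowProjAux

set_option maxHeartbeats 2000000 in
set_option synthInstance.maxHeartbeats 400000 in
/-- With `m = q^ℓ - 1`, `A ∈ M_ℓ(F_q)` a primitive `m`-th root of unity and
`k ≤ m`, the map `π` sending a matrix `B ∈ F_q[A]` to its `i₀`-th row (or its
`j₀`-th column) is an `F_q`-linear bijection, and the evaluation code
`C_{A,k,π}` has `F_q`-dimension exactly `kℓ` and minimum Hamming distance at
least `m - k + 1`. -/
theorem row_projection_evaluation_code
    (F : Type*) [Field F] [Fintype F] (ℓ m k : ℕ) (hℓ : 0 < ℓ)
    (hm : m + 1 = Fintype.card F ^ ℓ) (hk : k ≤ m)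
    (A : Matrix (Fin ℓ) (Fin ℓ) F)
    (hA1 : A ^ m = 1)
    (hA2 : ∀ i : ℕ, 0 < i → i < m → A ^ i ≠ 1)
    (hA3 : ∀ i j : ℕ, i < m → j < m → i ≠ j → IsUnit (A ^ i - A ^ j))
    (i₀ j₀ : Fin ℓ) :
    Function.Bijective
      (fun B : Algebra.adjoin F {A} =>
        fun u : Fin ℓ => (B : Matrix (Fin ℓ) (Fin ℓ) F) i₀ u) ∧
    Function.Bijective
      (fun B : Algebra.adjoin F {A} =>
        fun u : Fin ℓ => (B : Matrix (Fin ℓ) (Fin ℓ) F) u j₀) ∧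
    (∀ π : Matrix (Fin ℓ) (Fin ℓ) F →ₗ[F] (Fin ℓ → F),
      ((∀ B, π B = fun u => B i₀ u) ∨ (∀ B, π B = fun u => B u j₀)) →
      ∃ C : Submodule F (Fin m → Fin ℓ → F),
        (∀ c, c ∈ C ↔ ∃ P : Polynomial (Matrix (Fin ℓ) (Fin ℓ) F),
          (∀ i, P.coeff i ∈ Algebra.adjoin F {A}) ∧ P.degree < (k : ℕ) ∧
          ∀ t : Fin m, c t = π (Polynomial.eval (A ^ t.val) P)) ∧
        Module.finrank F C = k * ℓ ∧
        ∀ c ∈ C, c ≠ 0 →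
          m - k + 1 ≤ Nat.card {p : Fin m × Fin ℓ // c p.1 p.2 ≠ 0}) := by
  classical
  haveI : Nonempty (Fin ℓ) := ⟨⟨0, hℓ⟩⟩
  have h2 : 2 ≤ Fintype.card F := Fintype.one_lt_card
  have hm1 : 1 ≤ m := by
    have : 2 ≤ Fintype.card F ^ ℓ := le_trans h2 (Nat.le_self_pow (by omega) _)
    omega
  obtain ⟨hclass, hcardS, hrank⟩ := structure_lemma hℓ hm A hA1 hA3
  set S := Algebra.adjoin F {A} with hSdef
  haveI : Finite S := Subtype.finite
  have hAmem : A ∈ S := Algebra.subset_adjoin rfl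
  have hAunit : IsUnit A := isUnit_A hm1 A hA1
  have hpow_ne : ∀ i j : ℕ, i < m → j < m → i ≠ j → A ^ i ≠ A ^ j := by
    intro i j hi hj hij heq
    exact (hA3 i j hi hj hij).ne_zero (by rw [heq, sub_self])
  have hBunit : ∀ B : S, B ≠ 0 → IsUnit (B : Matrix (Fin ℓ) (Fin ℓ) F) := by
    intro B hB
    obtain ⟨t, ht⟩ := hclass B hB
    rw [ht]
    exact hAunit.pow _
  -- nonzero row / column of units
  have hrowne : ∀ B : S, B ≠ 0 → (fun u => (B : Matrix (Fin ℓ) (Fin ℓ) F) i₀ u) ≠ 0 := by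
    intro B hB h0
    obtain ⟨u, hu⟩ := hBunit B hB
    have h2' : ((B : Matrix (Fin ℓ) (Fin ℓ) F) *
        ((u⁻¹ : (Matrix (Fin ℓ) (Fin ℓ) F)ˣ) : Matrix (Fin ℓ) (Fin ℓ) F)) i₀ i₀ = 0 := by
      rw [Matrix.mul_apply]
      refine Finset.sum_eq_zero fun x _ => ?_
      have : (B : Matrix (Fin ℓ) (Fin ℓ) F) i₀ x = 0 := congrFun h0 x
      rw [this, zero_mul]
    rw [← hu, Units.mul_inv] at h2'
    rw [Matrix.one_apply_eq] at h2'
    exact one_ne_zero h2'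
  have hcolne : ∀ B : S, B ≠ 0 → (fun u => (B : Matrix (Fin ℓ) (Fin ℓ) F) u j₀) ≠ 0 := by
    intro B hB h0
    obtain ⟨u, hu⟩ := hBunit B hB
    have h2' : (((u⁻¹ : (Matrix (Fin ℓ) (Fin ℓ) F)ˣ) : Matrix (Fin ℓ) (Fin ℓ) F) *
        (B : Matrix (Fin ℓ) (Fin ℓ) F)) j₀ j₀ = 0 := by
      rw [Matrix.mul_apply]
      refine Finset.sum_eq_zero fun x _ => ?_
      have : (B : Matrix (Fin ℓ) (Fin ℓ) F) x j₀ = 0 := congrFun h0 x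
      rw [this, mul_zero]
    rw [← hu, Units.inv_mul] at h2'
    rw [Matrix.one_apply_eq] at h2'
    exact one_ne_zero h2'
  -- injectivity
  have hrow_inj : Function.Injective
      (fun B : S => fun u : Fin ℓ => (B : Matrix (Fin ℓ) (Fin ℓ) F) i₀ u) := by
    intro B B' h
    by_contra hne
    refine hrowne (B - B') (sub_ne_zero.mpr hne) ?_
    funext u
    have h1 : (B : Matrix (Fin ℓ) (Fin ℓ) F) i₀ u = (B' : Matrix (Fin ℓ) (Fin ℓ) F) i₀ u :=
      congrFun h u
    show ((B - B' : S) : Matrix (Fin ℓ) (Fin ℓ) F) i₀ u = 0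
    have h3 : ((B - B' : S) : Matrix (Fin ℓ) (Fin ℓ) F) =
        (B : Matrix (Fin ℓ) (Fin ℓ) F) - (B' : Matrix (Fin ℓ) (Fin ℓ) F) := rfl
    rw [h3, Matrix.sub_apply, h1, sub_self]
  have hcol_inj : Function.Injective
      (fun B : S => fun u : Fin ℓ => (B : Matrix (Fin ℓ) (Fin ℓ) F) u j₀) := by
    intro B B' h
    by_contra hne
    refine hcolne (B - B') (sub_ne_zero.mpr hne) ?_
    funext u
    have h1 : (B : Matrix (Fin ℓ) (Fin ℓ) F) u j₀ = (B' : Matrix (Fin ℓ) (Fin ℓ) F) u j₀ :=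
      congrFun h u
    show ((B - B' : S) : Matrix (Fin ℓ) (Fin ℓ) F) u j₀ = 0
    have h3 : ((B - B' : S) : Matrix (Fin ℓ) (Fin ℓ) F) =
        (B : Matrix (Fin ℓ) (Fin ℓ) F) - (B' : Matrix (Fin ℓ) (Fin ℓ) F) := rfl
    rw [h3, Matrix.sub_apply, h1, sub_self]
  have hcardFun : Nat.card (Fin ℓ → F) = m + 1 := by
    rw [Nat.card_eq_fintype_card]
    simp [hm]
  have hrow_bij : Function.Bijective
      (fun B : S => fun u : Fin ℓ => (B : Matrix (Fin ℓ) (Fin ℓ) F) i₀ u) := by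
    rw [Nat.bijective_iff_injective_and_card]
    exact ⟨hrow_inj, by rw [hcardS, hcardFun]⟩
  have hcol_bij : Function.Bijective
      (fun B : S => fun u : Fin ℓ => (B : Matrix (Fin ℓ) (Fin ℓ) F) u j₀) := by
    rw [Nat.bijective_iff_injective_and_card]
    exact ⟨hcol_inj, by rw [hcardS, hcardFun]⟩
  refine ⟨hrow_bij, hcol_bij, ?_⟩
  intro π hπ
  -- π is injective on S
  have hπ0 : ∀ B : S, π (B : Matrix (Fin ℓ) (Fin ℓ) F) = 0 → B = 0 := by
    intro B hB
    rcases hπ with h | h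
    · apply hrow_inj
      show _ = (fun u : Fin ℓ => ((0 : S) : Matrix (Fin ℓ) (Fin ℓ) F) i₀ u)
      calc (fun u : Fin ℓ => (B : Matrix (Fin ℓ) (Fin ℓ) F) i₀ u)
          = π (B : Matrix (Fin ℓ) (Fin ℓ) F) := (h _).symm
        _ = 0 := hB
        _ = _ := by funext u; simp
    · apply hcol_inj
      show _ = (fun u : Fin ℓ => ((0 : S) : Matrix (Fin ℓ) (Fin ℓ) F) u j₀)
      calc (fun u : Fin ℓ => (B : Matrix (Fin ℓ) (Fin ℓ) F) u j₀)
          = π (B : Matrix (Fin ℓ) (Fin ℓ) F) := (h _).symm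
        _ = 0 := hB
        _ = _ := by funext u; simp
  -- commutative domain structure on S
  letI : CommRing S := Algebra.adjoinCommRingOfComm F (by
    rintro a ha b hb
    rw [Set.mem_singleton_iff] at ha hb
    rw [ha, hb])
  haveI : Nontrivial S :=
    ⟨⟨0, 1, fun h => zero_ne_one (α := Matrix (Fin ℓ) (Fin ℓ) F) (congrArg Subtype.val h)⟩⟩
  haveI : NoZeroDivisors S := by
    constructor
    intro x y hxy
    by_contra hc
    push_neg at hc
    obtain ⟨hx, hy⟩ := hc
    obtain ⟨s, hs⟩ := hclass x hx
    obtain ⟨t, ht⟩ := hclass y hy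
    have hval : ((x * y : S) : Matrix (Fin ℓ) (Fin ℓ) F) = A ^ ((s : ℕ) + (t : ℕ)) := by
      rw [pow_add, ← hs, ← ht]; rfl
    have h0 : ((x * y : S) : Matrix (Fin ℓ) (Fin ℓ) F) = 0 := by rw [hxy]; rfl
    exact (hAunit.pow ((s : ℕ) + (t : ℕ))).ne_zero (by rw [← hval, h0])
  haveI : IsDomain S := NoZeroDivisors.to_isDomain S
  -- the valuation ring hom
  let valHom : S →+* Matrix (Fin ℓ) (Fin ℓ) F :=
    { toFun := fun x => (x : Matrix (Fin ℓ) (Fin ℓ) F)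
      map_one' := rfl
      map_mul' := fun _ _ => rfl
      map_zero' := rfl
      map_add' := fun _ _ => rfl }
  let a : S := ⟨A, hAmem⟩
  -- polynomials with coefficients in S
  let Qv : (Fin k → S) → Polynomial S := fun v => ∑ i : Fin k, Polynomial.monomial (i : ℕ) (v i)
  have hQeval : ∀ (v : Fin k → S) (t : ℕ),
      valHom ((Qv v).eval (a ^ t)) =
        ∑ i : Fin k, ((v i : Matrix (Fin ℓ) (Fin ℓ) F) * (A ^ t) ^ (i : ℕ)) := by
    intro v t
    rw [Polynomial.eval_finset_sum, map_sum]
    refine Finset.sum_congr rfl fun i _ => ?_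
    rw [Polynomial.eval_monomial, map_mul, map_pow, map_pow]
    rfl
  -- the evaluation linear map
  let Φ : (Fin k → S) →ₗ[F] (Fin m → Fin ℓ → F) :=
    { toFun := fun v => fun t =>
        π (∑ i : Fin k, ((v i : Matrix (Fin ℓ) (Fin ℓ) F) * (A ^ (t : ℕ)) ^ (i : ℕ)))
      map_add' := by
        intro v w
        funext t
        have hcoe : ∀ x y : S, ((x + y : S) : Matrix (Fin ℓ) (Fin ℓ) F) =
            (x : Matrix (Fin ℓ) (Fin ℓ) F) + y := fun _ _ => rfl
        show π _ = π _ + π _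
        rw [← map_add]
        congr 1
        rw [← Finset.sum_add_distrib]
        refine Finset.sum_congr rfl fun i _ => ?_
        show ((v i + w i : S) : Matrix (Fin ℓ) (Fin ℓ) F) * _ = _
        rw [hcoe, add_mul]
      map_smul' := by
        intro cc v
        funext t
        have hcoe : ∀ x : S, ((cc • x : S) : Matrix (Fin ℓ) (Fin ℓ) F) =
            cc • (x : Matrix (Fin ℓ) (Fin ℓ) F) := fun _ => rfl
        show π _ = cc • π _
        rw [← map_smul]
        congr 1
        rw [Finset.smul_sum]
        refine Finset.sum_congr rfl fun i _ => ?_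
        show ((cc • v i : S) : Matrix (Fin ℓ) (Fin ℓ) F) * _ = _
        rw [hcoe, smul_mul_assoc] }
  have hΦapp : ∀ (v : Fin k → S) (t : Fin m),
      Φ v t = π (valHom ((Qv v).eval (a ^ (t : ℕ)))) := by
    intro v t
    rw [hQeval]
    rfl
  -- roots
  have hroot : ∀ (v : Fin k → S) (t : Fin m), Φ v t = 0 → (Qv v).eval (a ^ (t : ℕ)) = 0 := by
    intro v t h
    rw [hΦapp] at h
    exact hπ0 _ h
  have hdistinct : ∀ s t : Fin m, s ≠ t → a ^ (s : ℕ) ≠ a ^ (t : ℕ) := by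
    intro s t hst h
    have : A ^ (s : ℕ) = A ^ (t : ℕ) := by
      have := congrArg valHom h
      rwa [map_pow, map_pow] at this
    exact hpow_ne s t s.isLt t.isLt (fun hc => hst (Fin.val_injective hc)) this
  -- counting roots
  have hcount : ∀ (v : Fin k → S), Qv v ≠ 0 → ∀ T : Finset (Fin m),
      (∀ t ∈ T, (Qv v).eval (a ^ (t : ℕ)) = 0) → T.card ≤ (Qv v).natDegree := by
    intro v hQne T hT
    have hsub : T.image (fun t : Fin m => a ^ (t : ℕ)) ⊆ (Qv v).roots.toFinset := by
      intro x hx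
      obtain ⟨t, ht, rfl⟩ := Finset.mem_image.mp hx
      rw [Multiset.mem_toFinset, Polynomial.mem_roots hQne]
      exact hT t ht
    have hinj : Set.InjOn (fun t : Fin m => a ^ (t : ℕ)) T := by
      intro s hs t ht h
      by_contra hne
      exact hdistinct s t hne h
    calc T.card = (T.image (fun t : Fin m => a ^ (t : ℕ))).card :=
          (Finset.card_image_of_injOn hinj).symm
      _ ≤ (Qv v).roots.toFinset.card := Finset.card_le_card hsub
      _ ≤ Multiset.card (Qv v).roots := Multiset.toFinset_card_le _
      _ ≤ (Qv v).natDegree := Polynomial.card_roots' _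
  -- injectivity of Φ
  have hΦinj : Function.Injective Φ := by
    rw [← LinearMap.ker_eq_bot, LinearMap.ker_eq_bot']
    intro v hv
    have hQ0 : Qv v = 0 := by
      by_contra hQne
      have hnd : (Qv v).natDegree < k :=
        (Polynomial.natDegree_lt_iff_degree_lt hQne).mpr (sum_monomial_degree v)
      have hall := hcount v hQne Finset.univ (fun t _ => hroot v t (congrFun hv t))
      rw [Finset.card_univ, Fintype.card_fin] at hall
      omega
    funext i
    have := sum_monomial_coeff (fun j => v j) i
    rw [show (∑ j : Fin k, Polynomial.monomial (j : ℕ) (v j)) = Qv v from rfl, hQ0,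
      Polynomial.coeff_zero] at this
    exact this.symm
  refine ⟨LinearMap.range Φ, ?_, ?_, ?_⟩
  · -- membership characterization
    intro c
    constructor
    · rintro ⟨v, rfl⟩
      refine ⟨∑ i : Fin k, Polynomial.monomial (i : ℕ) ((v i : Matrix (Fin ℓ) (Fin ℓ) F)),
        ?_, ?_, ?_⟩
      · intro n
        rw [Polynomial.finset_sum_coeff]
        refine Subalgebra.sum_mem _ fun i _ => ?_
        rw [Polynomial.coeff_monomial]
        split
        · exact SetLike.coe_mem _
        · exact Subalgebra.zero_mem _
      · exact sum_monomial_degree _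
      · intro t
        show Φ v t = _
        rw [Polynomial.eval_finset_sum]
        show π _ = π _
        congr 1
        exact Finset.sum_congr rfl fun i _ => (Polynomial.eval_monomial).symm
    · rintro ⟨P, hmem, hdeg, hc⟩
      refine ⟨fun i => ⟨P.coeff (i : ℕ), hmem (i : ℕ)⟩, ?_⟩
      funext t
      rw [hc t]
      show π _ = π _
      congr 1
      by_cases hP : P = 0
      · subst hP
        simp
      · have hnd : P.natDegree < k := (Polynomial.natDegree_lt_iff_degree_lt hP).mpr hdeg
        rw [Polynomial.eval_eq_sum_range' hnd]
        exact Fin.sum_univ_eq_sum_range (fun i => P.coeff i * (A ^ (t : ℕ)) ^ i) k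
  · -- dimension
    rw [LinearMap.finrank_range_of_inj hΦinj]
    rw [Module.finrank_pi_fintype F]
    rw [hrank]
    simp [Finset.sum_const, Finset.card_univ, mul_comm]
  · -- distance
    rintro c ⟨v, rfl⟩ hc0
    have hk1 : 1 ≤ k := by
      by_contra hk0
      apply hc0
      have hk0' : k = 0 := by omega
      funext t
      show π _ = _
      subst hk0'
      rw [show (∑ i : Fin 0, ((v i : Matrix (Fin ℓ) (Fin ℓ) F) * (A ^ (t : ℕ)) ^ (i : ℕ))) = 0
        from Finset.sum_empty, map_zero]
      rfl
    have hQne : Qv v ≠ 0 := by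
      intro h0
      apply hc0
      have hv0 : v = 0 := by
        funext i
        have := sum_monomial_coeff (fun j => v j) i
        rw [show (∑ j : Fin k, Polynomial.monomial (j : ℕ) (v j)) = Qv v from rfl, h0,
          Polynomial.coeff_zero] at this
        exact this.symm
      rw [hv0, map_zero]
    have hnd : (Qv v).natDegree < k :=
      (Polynomial.natDegree_lt_iff_degree_lt hQne).mpr (sum_monomial_degree v)
    set Z : Finset (Fin m) := Finset.univ.filter (fun t => Φ v t = 0) with hZ
    have hZcard : Z.card ≤ k - 1 := by
      have := hcount v hQne Z (fun t ht => hroot v t (Finset.mem_filter.mp ht).2)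
      omega
    have hNZ : ∀ t : Fin m, t ∉ Z → ∃ u, Φ v t u ≠ 0 := by
      intro t ht
      have h1 : Φ v t ≠ 0 := by
        intro h
        exact ht (Finset.mem_filter.mpr ⟨Finset.mem_univ t, h⟩)
      exact Function.ne_iff.mp h1
    let g : {t : Fin m // t ∈ Zᶜ} → {p : Fin m × Fin ℓ // Φ v p.1 p.2 ≠ 0} := fun t =>
      ⟨(t.1, Classical.choose (hNZ t.1 (Finset.mem_compl.mp t.2))),
        Classical.choose_spec (hNZ t.1 (Finset.mem_compl.mp t.2))⟩
    have hg : Function.Injective g := by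
      intro s t h
      exact Subtype.ext (congrArg (fun x => x.1.1) h)
    have hle : Nat.card {t : Fin m // t ∈ Zᶜ} ≤
        Nat.card {p : Fin m × Fin ℓ // Φ v p.1 p.2 ≠ 0} :=
      Nat.card_le_card_of_injective g hg
    have hcompl : Nat.card {t : Fin m // t ∈ Zᶜ} = m - Z.card := by
      rw [Nat.card_eq_fintype_card, Fintype.card_coe, Finset.card_compl, Fintype.card_fin]
    omega
end
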